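/- arXiv:1412.5761 — 7 statements merged into one kernel-verified Lean document; each statement's English description precedes it below -/
import Mathlib

section
/- Let X and Y be Banach spaces over ℝ. If X is almost reflexive and Y has the Schur property, then every bounded linear operator T : X → Y is a compact operator. -/
open Filter Topology

section Defs

variable {E : Type*} [NormedAddCommGroup E] [NormedSpace ℝ E]
variable {F : Type*} [NormedAddCommGroup F] [NormedSpace ℝ F]

/-- A sequence converges weakly to `x₀`. -/
def WeakConvTo (x : ℕ → E) (x₀ : E) : Prop :=
  ∀ f : E →L[ℝ] ℝ, Tendsto (fun n => f (x n)) atTop (𝓝 (f x₀))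

/-- A sequence is weakly Cauchy. -/
def WeaklyCauchySeq (x : ℕ → E) : Prop :=
  ∀ f : E →L[ℝ] ℝ, ∃ L : ℝ, Tendsto (fun n => f (x n)) atTop (𝓝 L)

/-- Every bounded sequence has a weakly Cauchy subsequence. -/
def AlmostReflexive (E : Type*) [NormedAddCommGroup E] [NormedSpace ℝ E] : Prop :=
  ∀ x : ℕ → E, (∃ C : ℝ, ∀ n, ‖x n‖ ≤ C) →
    ∃ φ : ℕ → ℕ, StrictMono φ ∧ WeaklyCauchySeq (x ∘ φ)

/-- Every weakly convergent sequence converges in norm. -/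
def SchurProperty (E : Type*) [NormedAddCommGroup E] [NormedSpace ℝ E] : Prop :=
  ∀ (x : ℕ → E) (x₀ : E), WeakConvTo x x₀ → Tendsto x atTop (𝓝 x₀)

/-- Sequential reflexivity: every bounded sequence has a weakly convergent subsequence. -/
def SeqReflexive (E : Type*) [NormedAddCommGroup E] [NormedSpace ℝ E] : Prop :=
  ∀ x : ℕ → E, (∃ C : ℝ, ∀ n, ‖x n‖ ≤ C) →
    ∃ φ : ℕ → ℕ, StrictMono φ ∧ ∃ x₀ : E, WeakConvTo (x ∘ φ) x₀

/-- Every weakly Cauchy sequence converges weakly. -/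
def WeaklySeqComplete (E : Type*) [NormedAddCommGroup E] [NormedSpace ℝ E] : Prop :=
  ∀ x : ℕ → E, WeaklyCauchySeq x → ∃ x₀ : E, WeakConvTo x x₀

/-- No infinite-dimensional closed subspace is (sequentially) reflexive. -/
def VeryIrreflexive (E : Type*) [NormedAddCommGroup E] [NormedSpace ℝ E] : Prop :=
  ∀ X₀ : Subspace ℝ E, IsClosed (X₀ : Set E) → ¬FiniteDimensional ℝ X₀ →
    ¬SeqReflexive X₀

/-- A strictly singular bounded operator: on no infinite-dimensional closed subspace is it
an isomorphism onto its image. -/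
def StrictlySingular (T : E →L[ℝ] F) : Prop :=
  ∀ X₀ : Subspace ℝ E, IsClosed (X₀ : Set E) → ¬FiniteDimensional ℝ X₀ →
    ¬∃ c : ℝ, 0 < c ∧ ∀ x ∈ X₀, c * ‖x‖ ≤ ‖T x‖

/-- A weakly compact operator. -/
def WeaklyCompactOp (T : E →L[ℝ] F) : Prop :=
  ∀ x : ℕ → E, (∃ C : ℝ, ∀ n, ‖x n‖ ≤ C) →
    ∃ φ : ℕ → ℕ, StrictMono φ ∧ ∃ y : F, WeakConvTo (fun n => T (x (φ n))) y

/-- A completely continuous operator maps weakly convergent sequences to norm convergent ones. -/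
def CompletelyContinuousOp (T : E →L[ℝ] F) : Prop :=
  ∀ (x : ℕ → E) (x₀ : E), WeakConvTo x x₀ → ∃ y : F, Tendsto (fun n => T (x n)) atTop (𝓝 y)

/-- The image of the closed unit ball is relatively compact in norm. -/
def CompactOp (T : E →L[ℝ] F) : Prop :=
  IsCompact (closure (⇑T '' Metric.closedBall (0 : E) 1))

/-- The Dunford–Pettis property. -/
def DunfordPettisProp (E : Type*) [NormedAddCommGroup E] [NormedSpace ℝ E] : Prop :=
  ∀ (Z : Type*) [NormedAddCommGroup Z] [NormedSpace ℝ Z] [CompleteSpace Z],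
    ∀ T : E →L[ℝ] Z, WeaklyCompactOp T → CompletelyContinuousOp T

/-- The reciprocal Dunford–Pettis property. -/
def ReciprocalDunfordPettisProp (E : Type*) [NormedAddCommGroup E] [NormedSpace ℝ E] : Prop :=
  ∀ (Z : Type*) [NormedAddCommGroup Z] [NormedSpace ℝ Z] [CompleteSpace Z],
    ∀ T : E →L[ℝ] Z, CompletelyContinuousOp T → WeaklyCompactOp T

/-- The Dieudonné property. -/
def DieudonneProp (E : Type*) [NormedAddCommGroup E] [NormedSpace ℝ E] : Prop :=
  ∀ (Z : Type*) [NormedAddCommGroup Z] [NormedSpace ℝ Z] [CompleteSpace Z],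
    ∀ T : E →L[ℝ] Z,
      (∀ x : ℕ → E, WeaklyCauchySeq x → ∃ y : Z, WeakConvTo (fun n => T (x n)) y) →
      WeaklyCompactOp T

/-- A Grothendieck space: weak*-convergent sequences in the dual converge weakly. -/
def GrothendieckSpace (E : Type*) [NormedAddCommGroup E] [NormedSpace ℝ E] : Prop :=
  ∀ (f : ℕ → (E →L[ℝ] ℝ)) (g : E →L[ℝ] ℝ),
    (∀ x : E, Tendsto (fun n => f n x) atTop (𝓝 (g x))) →
    ∀ F : (E →L[ℝ] ℝ) →L[ℝ] ℝ, Tendsto (fun n => F (f n)) atTop (𝓝 (F g))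

/-- The Banach space ℓ¹ of absolutely summable real sequences. -/
abbrev EllOne : Type := lp (fun _ : ℕ => ℝ) 1

/-- Quasi-reflexive: the canonical image of `E` in its bidual has finite codimension. -/
def QuasiReflexive (E : Type*) [NormedAddCommGroup E] [NormedSpace ℝ E] : Prop :=
  FiniteDimensional ℝ
    ((StrongDual ℝ (StrongDual ℝ E)) ⧸
      LinearMap.range (NormedSpace.inclusionInDoubleDual ℝ E).toLinearMap)

/-- Hereditarily-ℓ¹: every infinite-dimensional closed subspace contains a closed subspace
topologically isomorphic to ℓ¹. -/
def HereditarilyEllOne (E : Type*) [NormedAddCommGroup E] [NormedSpace ℝ E] : Prop :=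
  ∀ X₀ : Subspace ℝ E, IsClosed (X₀ : Set E) → ¬FiniteDimensional ℝ X₀ →
    ∃ Z : Subspace ℝ E, Z ≤ X₀ ∧ IsClosed (Z : Set E) ∧ Nonempty (Z ≃L[ℝ] EllOne)

end Defs

section Aux
variable {Y : Type*} [NormedAddCommGroup Y] [NormedSpace ℝ Y]

lemma cauchy_of_weaklyCauchy_schur (hY : SchurProperty Y) (y : ℕ → Y)
    (hy : WeaklyCauchySeq y) : CauchySeq y := by
  rw [Metric.cauchySeq_iff]
  by_contra h
  push_neg at h
  obtain ⟨ε, hε, H⟩ := h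
  choose m hm n hn hd using H
  set z : ℕ → Y := fun N => y (m N) - y (n N) with hz
  have hmz : Tendsto m atTop atTop := tendsto_atTop_mono hm tendsto_id
  have hnz : Tendsto n atTop atTop := tendsto_atTop_mono hn tendsto_id
  have hweak : WeakConvTo z (0 : Y) := by
    intro f
    obtain ⟨L, hL⟩ := hy f
    have h1 : Tendsto (fun N => f (y (m N))) atTop (𝓝 L) := hL.comp hmz
    have h2 : Tendsto (fun N => f (y (n N))) atTop (𝓝 L) := hL.comp hnz
    have := h1.sub h2
    simp only [sub_self] at this
    simpa [hz, map_sub, map_zero] using this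
  have hnorm := hY z 0 hweak
  have : Tendsto (fun N => ‖z N‖) atTop (𝓝 0) := by
    simpa using hnorm.norm
  have hev : ∀ᶠ N in atTop, ‖z N‖ < ε := by
    have := this.eventually (eventually_lt_nhds hε)
    exact this
  obtain ⟨N, hN⟩ := hev.exists
  have : ε ≤ ‖z N‖ := by
    have := hd N
    rwa [dist_eq_norm] at this
  linarith

lemma isSeqCompact_closure_of_subseq {S : Set Y}
    (h : ∀ u : ℕ → Y, (∀ k, u k ∈ S) →
      ∃ φ : ℕ → ℕ, StrictMono φ ∧ ∃ y : Y, Tendsto (u ∘ φ) atTop (𝓝 y)) :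
    IsSeqCompact (closure S) := by
  intro u hu
  have hv : ∀ k : ℕ, ∃ v ∈ S, dist (u k) v < 1 / (k + 1) := by
    intro k
    exact Metric.mem_closure_iff.mp (hu k) _ (by positivity)
  choose v hvS hvd using hv
  obtain ⟨φ, hφ, y, hy⟩ := h v hvS
  refine ⟨y, ?_, φ, hφ, ?_⟩
  · exact mem_closure_of_tendsto hy (Eventually.of_forall fun k => hvS _)
  · have hd0 : Tendsto (fun k => dist (u (φ k)) (v (φ k))) atTop (𝓝 0) := by
      have hb : Tendsto (fun k : ℕ => 1 / ((φ k : ℝ) + 1)) atTop (𝓝 0) := by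
        apply Tendsto.comp tendsto_one_div_add_atTop_nhds_zero_nat
        exact hφ.tendsto_atTop
      refine squeeze_zero (fun k => dist_nonneg) (fun k => le_of_lt (hvd (φ k))) hb
    have := hy
    rw [tendsto_iff_dist_tendsto_zero] at this ⊢
    refine squeeze_zero (fun k => dist_nonneg) (fun k => dist_triangle _ (v (φ k)) _) ?_
    simpa using hd0.add this

end Aux

variable {X : Type*} [NormedAddCommGroup X] [NormedSpace ℝ X] [CompleteSpace X]
variable {Y : Type*} [NormedAddCommGroup Y] [NormedSpace ℝ Y] [CompleteSpace Y]

/-- If `X` is almost reflexive and `Y` has the Schur property, then every bounded linear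
operator `T : X → Y` is compact. -/
theorem stmt0 (hX : AlmostReflexive X) (hY : SchurProperty Y) (T : X →L[ℝ] Y) :
    CompactOp T := by
  unfold CompactOp
  apply IsSeqCompact.isCompact
  apply isSeqCompact_closure_of_subseq
  intro u hu
  choose x hx hTx using hu
  obtain ⟨φ, hφ, hwc⟩ := hX x ⟨1, fun k => by
    simpa [Metric.mem_closedBall, dist_eq_norm] using hx k⟩
  have hwcy : WeaklyCauchySeq (fun k => T (x (φ k))) := by
    intro g
    exact hwc (g.comp T)
  have hc : CauchySeq (fun k => T (x (φ k))) :=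
    cauchy_of_weaklyCauchy_schur hY _ hwcy
  obtain ⟨y, hy⟩ := cauchySeq_tendsto_of_complete hc
  refine ⟨φ, hφ, y, ?_⟩
  have : (u ∘ φ) = fun k => T (x (φ k)) := by
    funext k; simp [Function.comp, hTx]
  rw [this]
  exact hy
end

section
/- Let X and Y be Banach spaces over ℝ. If the continuous dual X' (with the operator norm) has the Schur property and Y has the Schur property, then every bounded linear operator T : X → Y is a compact operator. -/
open Filter Topology

namespace Stmt2Aux



/-! ### Ultrafilter limits of bounded real sequences -/

noncomputable def ulim (t : ℕ → ℝ) : ℝ :=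
  limUnder (Filter.hyperfilter ℕ : Filter ℕ) t

theorem ulim_eq {t : ℕ → ℝ} {a : ℝ} (h : Tendsto t (Filter.hyperfilter ℕ : Filter ℕ) (𝓝 a)) :
    ulim t = a := h.limUnder_eq

theorem ulim_spec {t : ℕ → ℝ} {R : ℝ} (hb : ∀ n, |t n| ≤ R) :
    Tendsto t (Filter.hyperfilter ℕ : Filter ℕ) (𝓝 (ulim t)) := by
  have hmem : (Filter.hyperfilter ℕ : Filter ℕ) ≤ 𝓟 (t ⁻¹' Set.Icc (-R) R) := by
    rw [le_principal_iff]
    have : t ⁻¹' Set.Icc (-R) R = Set.univ := by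
      ext n; simp only [Set.mem_preimage, Set.mem_Icc, Set.mem_univ, iff_true]
      exact abs_le.1 (hb n)
    rw [this]; exact Filter.univ_mem
  have hcomp : IsCompact (Set.Icc (-R) R) := isCompact_Icc
  have hle : (Ultrafilter.map t (Filter.hyperfilter ℕ) : Filter ℝ) ≤ 𝓟 (Set.Icc (-R) R) := by
    rw [Ultrafilter.coe_map]
    calc Filter.map t (Filter.hyperfilter ℕ : Filter ℕ) ≤
        Filter.map t (𝓟 (t ⁻¹' Set.Icc (-R) R)) := Filter.map_mono hmem
      _ ≤ 𝓟 (Set.Icc (-R) R) := by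
          rw [Filter.map_principal]; exact principal_mono.2 (Set.image_preimage_subset _ _)
  obtain ⟨a, -, ha⟩ := hcomp.ultrafilter_le_nhds _ hle
  have ha' : Tendsto t (Filter.hyperfilter ℕ : Filter ℕ) (𝓝 a) := ha
  rw [ulim_eq ha']; exact ha'

/-! ### A bounded real sequence with no limit oscillates across some rational gap -/

theorem osc_of_not_tendsto {t : ℕ → ℝ} {R : ℝ} (hb : ∀ n, |t n| ≤ R)
    (hnc : ¬∃ L, Tendsto t atTop (𝓝 L)) :
    ∃ r s : ℚ, (r : ℝ) < s ∧ {n | t n < r}.Infinite ∧ {n | (s : ℝ) < t n}.Infinite := by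
  have hbdd : IsBoundedUnder (· ≤ ·) atTop t :=
    isBoundedUnder_of ⟨R, fun n => (abs_le.1 (hb n)).2⟩
  have hbdd' : IsBoundedUnder (· ≥ ·) atTop t :=
    isBoundedUnder_of ⟨-R, fun n => (abs_le.1 (hb n)).1⟩
  set L := limsup t atTop with hL
  have hnt : ¬ Tendsto t atTop (𝓝 L) := fun h => hnc ⟨L, h⟩
  -- get ε with |t n - L| ≥ ε infinitely often
  rw [Metric.tendsto_atTop] at hnt
  push_neg at hnt
  obtain ⟨ε, hε, hfreq⟩ := hnt
  have hinf : {n | ε ≤ |t n - L|}.Infinite := by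
    apply Set.infinite_of_forall_exists_gt
    intro a
    obtain ⟨n, hn1, hn2⟩ := hfreq (a + 1)
    exact ⟨n, by rw [Real.dist_eq] at hn2; exact hn2, by omega⟩
  -- above-L part is finite
  have habove : ∀ δ > 0, {n | L + δ ≤ t n}.Finite := by
    intro δ hδ
    have h2 : ∀ᶠ n in atTop, t n < L + δ :=
      eventually_lt_of_limsup_lt (by rw [← hL]; linarith) hbdd
    rw [← Nat.cofinite_eq_atTop, Filter.eventually_cofinite] at h2
    exact h2.subset (by intro n hn; simp only [Set.mem_setOf_eq] at *; linarith)
  have hbelow : {n | t n ≤ L - ε}.Infinite := by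
    intro hfin
    have hsub : {n | ε ≤ |t n - L|} ⊆ {n | t n ≤ L - ε} ∪ {n | L + ε ≤ t n} := by
      intro n hn
      simp only [Set.mem_setOf_eq, Set.mem_union] at *
      rcases le_abs.1 hn with h | h
      · right; linarith
      · left; linarith
    exact hinf ((hfin.union (habove ε hε)).subset hsub)
  have hfreqabove : ∀ δ > 0, {n | L - δ < t n}.Infinite := by
    intro δ hδ
    have : ∃ᶠ n in atTop, L - δ < t n :=
      frequently_lt_of_lt_limsup hbdd'.isCoboundedUnder_le (by rw [← hL]; linarith)
    rwa [Nat.frequently_atTop_iff_infinite] at this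
  obtain ⟨r, hr1, hr2⟩ := exists_rat_btwn (show L - ε < L - ε/2 by linarith)
  obtain ⟨s, hs1, hs2⟩ := exists_rat_btwn hr2
  refine ⟨r, s, by exact_mod_cast hs1, ?_, ?_⟩
  · exact hbelow.mono fun n hn => by simp only [Set.mem_setOf_eq] at *; linarith
  · have := hfreqabove (L - s) (by linarith)
    exact this.mono fun n hn => by simp only [Set.mem_setOf_eq] at *; linarith




/-! ### Infinite subsets of ℕ -/

theorem inter_Ioi_infinite {C : Set ℕ} (hC : C.Infinite) (a : ℕ) :
    (C ∩ Set.Ioi a).Infinite := by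
  have : C ∩ Set.Ioi a = C \ Set.Iic a := by
    ext n; simp [Set.mem_Ioi, Set.mem_Iic, not_le]
  rw [this]
  exact hC.diff (Set.finite_Iic a)

/-- Monotone enumeration (into) of an infinite subset of ℕ. -/
theorem exists_enum {C : Set ℕ} (hC : C.Infinite) :
    ∃ e : ℕ → ℕ, StrictMono e ∧ ∀ n, e n ∈ C := by
  have step : ∀ a : ℕ, ∃ b ∈ C, a < b := fun a => hC.exists_gt a
  choose f hf1 hf2 using step
  refine ⟨fun n => Nat.rec (f 0) (fun _ prev => f prev) n, strictMono_nat_of_lt_succ ?_, ?_⟩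
  · intro n; exact hf2 _
  · intro n; cases n with
    | zero => exact hf1 0
    | succ m => exact hf1 _

/-! ### Extraction of a separated sequence from a non-totally-bounded set -/

theorem exists_separated_seq {Y : Type*} [MetricSpace Y] {S : Set Y}
    (hS : ¬ TotallyBounded S) :
    ∃ (ε : ℝ) (u : ℕ → Y), 0 < ε ∧ (∀ n, u n ∈ S) ∧
      ∀ m n, m ≠ n → ε ≤ dist (u m) (u n) := by
  rw [Metric.totallyBounded_iff] at hS
  push_neg at hS
  obtain ⟨ε, hε, hcov⟩ := hS
  -- Zorn: a maximal ε-separated subset of S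
  have hzorn := zorn_subset {M : Set Y | M ⊆ S ∧ M.Pairwise fun a b => ε ≤ dist a b} ?_
  · obtain ⟨M, ⟨hMS, hMsep⟩, hmax⟩ := hzorn
    have hMinf : M.Infinite := by
      intro hfin
      apply hcov M hfin
      intro p hp
      by_contra hout
      simp only [Set.mem_iUnion, Metric.mem_ball, not_exists, not_lt] at hout
      have hpM : p ∉ M := fun hpM => absurd (hout p hpM) (by simp; linarith)
      have hmem : insert p M ∈ {M : Set Y | M ⊆ S ∧ M.Pairwise fun a b => ε ≤ dist a b} := by
        refine ⟨Set.insert_subset hp hMS, Set.Pairwise.insert hMsep fun b hb hne => ?_⟩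
        exact ⟨hout b hb, by rw [dist_comm]; exact hout b hb⟩
      exact hpM (hmax hmem (Set.subset_insert p M) (Set.mem_insert p M))
    let f := hMinf.natEmbedding
    refine ⟨ε, fun n => (f n : Y), hε, fun n => hMS (f n).2, fun m n hmn => ?_⟩
    have hne : ((f m : Y)) ≠ ((f n : Y)) := by
      intro heq
      exact hmn (f.injective (Subtype.ext heq))
    exact hMsep (f m).2 (f n).2 hne
  · -- chains
    intro c hc hchain
    refine ⟨⋃₀ c, ⟨?_, ?_⟩, fun M hM => Set.subset_sUnion_of_mem hM⟩
    · exact Set.sUnion_subset fun M hM => (hc hM).1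
    · intro a ha b hb hne
      obtain ⟨Ma, hMa, haMa⟩ := ha
      obtain ⟨Mb, hMb, hbMb⟩ := hb
      rcases hchain.total hMa hMb with h | h
      · exact (hc hMb).2 (h haMa) hbMb hne
      · exact (hc hMa).2 haMa (h hbMb) hne





structure FusionNode where
  m : ℕ
  Cs : Set ℕ
  P : Finset ℕ
  Q : Finset ℕ
  b : Bool

section Fusion

variable {α : Type*} (A B : ℕ → Set α)

/-- `f` oscillates along `C` within `D`. -/
def Osc (D : Set α) (C : Set ℕ) : Prop :=
  ∃ f ∈ D, {n | n ∈ C ∧ f ∈ A n}.Infinite ∧ {n | n ∈ C ∧ f ∈ B n}.Infinite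

/-- intersection pattern -/
def Pat (P Q : Finset ℕ) : Set α :=
  {f | (∀ n ∈ P, f ∈ A n) ∧ (∀ n ∈ Q, f ∈ B n)}

def Inv (F : Finset ℕ) (C : Set ℕ) : Prop :=
  ∀ P Q : Finset ℕ, P ⊆ F → Q ⊆ F → Disjoint P Q →
    ∀ C', C' ⊆ C → C'.Infinite → Osc A B (Pat A B P Q) C'

variable {A B}

theorem osc_mono_idx {D : Set α} {C C' : Set ℕ} (h : C ⊆ C') (ho : Osc A B D C) :
    Osc A B D C' := by
  obtain ⟨f, hf, h1, h2⟩ := ho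
  exact ⟨f, hf, h1.mono (fun n hn => ⟨h hn.1, hn.2⟩), h2.mono (fun n hn => ⟨h hn.1, hn.2⟩)⟩

theorem pat_insert_left {P Q : Finset ℕ} {n : ℕ} (hn : n ∈ P) :
    Pat A B P Q = Pat A B (P.erase n) Q ∩ A n := by
  ext f
  simp only [Pat, Set.mem_setOf_eq, Set.mem_inter_iff]
  constructor
  · intro ⟨h1, h2⟩
    exact ⟨⟨fun m hm => h1 m (Finset.mem_of_mem_erase hm), h2⟩, h1 n hn⟩
  · intro ⟨⟨h1, h2⟩, h3⟩
    refine ⟨fun m hm => ?_, h2⟩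
    rcases eq_or_ne m n with rfl | hne
    · exact h3
    · exact h1 m (Finset.mem_erase.2 ⟨hne, hm⟩)

theorem pat_insert_right {P Q : Finset ℕ} {n : ℕ} (hn : n ∈ Q) :
    Pat A B P Q = Pat A B P (Q.erase n) ∩ B n := by
  ext f
  simp only [Pat, Set.mem_setOf_eq, Set.mem_inter_iff]
  constructor
  · intro ⟨h1, h2⟩
    exact ⟨⟨h1, fun m hm => h2 m (Finset.mem_of_mem_erase hm)⟩, h2 n hn⟩
  · intro ⟨⟨h1, h2⟩, h3⟩
    refine ⟨h1, fun m hm => ?_⟩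
    rcases eq_or_ne m n with rfl | hne
    · exact h3
    · exact h2 m (Finset.mem_erase.2 ⟨hne, hm⟩)

/-- The key extension lemma (combinatorial forcing / fusion). -/
theorem extend {F : Finset ℕ} {C : Set ℕ} (hC : C.Infinite) (hinv : Inv A B F C) :
    ∃ n ∈ C, ∃ Cp, Cp ⊆ C ∩ Set.Ioi n ∧ Cp.Infinite ∧ Inv A B (insert n F) Cp := by
  by_contra hcon
  push_neg at hcon
  -- the one-step failure extractor
  have step : ∀ n ∈ C, ∀ C₀, C₀ ⊆ C ∩ Set.Ioi n → C₀.Infinite →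
      ∃ (P Q : Finset ℕ) (C' : Set ℕ) (b : Bool), P ⊆ F ∧ Q ⊆ F ∧ Disjoint P Q ∧
        C' ⊆ C₀ ∧ C'.Infinite ∧
        ∀ C'', C'' ⊆ C' → C''.Infinite →
          ¬ Osc A B (Pat A B P Q ∩ (bif b then A n else B n)) C'' := by
    intro n hn C₀ hC₀sub hC₀inf
    have hni := hcon n hn C₀ hC₀sub hC₀inf
    rw [Inv] at hni
    push_neg at hni
    obtain ⟨P', Q', hP', hQ', hdisj, C', hC'sub, hC'inf, hnosc⟩ := hni
    by_cases hnP : n ∈ P'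
    · refine ⟨P'.erase n, Q', C', true, ?_, ?_, ?_, hC'sub, hC'inf, ?_⟩
      · intro x hx
        rcases Finset.mem_erase.1 hx with ⟨hne, hxP⟩
        rcases Finset.mem_insert.1 (hP' hxP) with rfl | h
        · exact absurd rfl hne
        · exact h
      · intro x hx
        rcases Finset.mem_insert.1 (hQ' hx) with rfl | h
        · exact absurd (hdisj.forall_ne_finset hnP hx) (by simp)
        · exact h
      · exact Finset.disjoint_of_subset_left (Finset.erase_subset _ _) hdisj
      · intro C'' hsub hinf hosc
        apply hnosc
        apply osc_mono_idx hsub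
        rwa [pat_insert_left hnP]
    · by_cases hnQ : n ∈ Q'
      · refine ⟨P', Q'.erase n, C', false, ?_, ?_, ?_, hC'sub, hC'inf, ?_⟩
        · intro x hx
          rcases Finset.mem_insert.1 (hP' hx) with rfl | h
          · exact absurd hnQ (Finset.disjoint_left.1 hdisj hx)
          · exact h
        · intro x hx
          rcases Finset.mem_erase.1 hx with ⟨hne, hxQ⟩
          rcases Finset.mem_insert.1 (hQ' hxQ) with rfl | h
          · exact absurd rfl hne
          · exact h
        · exact Finset.disjoint_of_subset_right (Finset.erase_subset _ _) hdisj
        · intro C'' hsub hinf hosc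
          apply hnosc
          apply osc_mono_idx hsub
          rwa [pat_insert_right hnQ]
      · -- n in neither: contradiction with hinv
        exfalso
        have hP'F : P' ⊆ F := fun x hx => by
          rcases Finset.mem_insert.1 (hP' hx) with rfl | h
          · exact absurd hx hnP
          · exact h
        have hQ'F : Q' ⊆ F := fun x hx => by
          rcases Finset.mem_insert.1 (hQ' hx) with rfl | h
          · exact absurd hx hnQ
          · exact h
        exact hnosc (hinv P' Q' hP'F hQ'F hdisj C'
          (fun x hx => (hC₀sub (hC'sub hx)).1) hC'inf)
  classical
  -- Goodness of a node
  set NG : FusionNode → Prop := fun d =>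
    d.m ∈ C ∧ d.Cs ⊆ C ∩ Set.Ioi d.m ∧ d.Cs.Infinite ∧ d.P ⊆ F ∧ d.Q ⊆ F ∧ Disjoint d.P d.Q ∧
    ∀ C'', C'' ⊆ d.Cs → C''.Infinite →
      ¬ Osc A B (Pat A B d.P d.Q ∩ (bif d.b then A d.m else B d.m)) C'' with hNG
  have mker : ∀ n ∈ C, ∀ C₀, C₀ ⊆ C ∩ Set.Ioi n → C₀.Infinite →
      ∃ d : FusionNode, NG d ∧ d.m = n ∧ d.Cs ⊆ C₀ := by
    intro n hn C₀ h1 h2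
    obtain ⟨P, Q, C', b, k1, k2, k3, k4, k5, k6⟩ := step n hn C₀ h1 h2
    exact ⟨⟨n, C', P, Q, b⟩, ⟨hn, fun x hx => h1 (k4 hx), k5, k1, k2, k3, k6⟩, rfl, k4⟩
  -- successor operation on good nodes
  have mk' : ∀ p : {d : FusionNode // NG d},
      ∃ p' : {d : FusionNode // NG d}, p'.1.m ∈ p.1.Cs ∧ p'.1.Cs ⊆ p.1.Cs := by
    intro ⟨d, hd⟩
    obtain ⟨hmm, hsub, hinf, -, -, -, -⟩ := hd
    obtain ⟨n', hn'⟩ := hinf.nonempty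
    have hn'C : n' ∈ C := (hsub hn').1
    obtain ⟨d', hd', hdm, hdCs⟩ := mker n' hn'C (d.Cs ∩ Set.Ioi n')
      (fun x hx => ⟨(hsub hx.1).1, hx.2⟩) (inter_Ioi_infinite hinf n')
    exact ⟨⟨d', hd'⟩, by rw [hdm]; exact hn', fun x hx => (hdCs hx).1⟩
  choose nxt hnxt1 hnxt2 using mk'
  -- base node
  obtain ⟨n₀, hn₀⟩ := hC.nonempty
  obtain ⟨d₀, hd₀, -, -⟩ := mker n₀ hn₀ (C ∩ Set.Ioi n₀) (fun x hx => hx)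
    (inter_Ioi_infinite hC n₀)
  -- the recursive sequence of nodes
  let seq : ℕ → {d : FusionNode // NG d} :=
    fun k => Nat.rec (⟨d₀, hd₀⟩ : {d : FusionNode // NG d}) (fun _ p => nxt p) k
  have hseq : ∀ k, seq (k + 1) = nxt (seq k) := fun _ => rfl
  have hmlt : ∀ k, (seq k).1.m < (seq (k+1)).1.m := by
    intro k
    have h1 : (seq (k+1)).1.m ∈ (seq k).1.Cs := by rw [hseq k]; exact hnxt1 (seq k)
    exact ((seq k).2.2.1 h1).2
  have hmsm : StrictMono (fun k => (seq k).1.m) := strictMono_nat_of_lt_succ hmlt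
  have hCssub : ∀ k, (seq (k+1)).1.Cs ⊆ (seq k).1.Cs := by
    intro k; rw [hseq k]; exact hnxt2 (seq k)
  have hchain : ∀ j l, j ≤ l → (seq l).1.Cs ⊆ (seq j).1.Cs := by
    intro j l hjl
    induction l, hjl using Nat.le_induction with
    | base => exact fun x hx => hx
    | succ l hl ih => exact fun x hx => ih (hCssub l hx)
  have hm_in : ∀ j l, j < l → (seq l).1.m ∈ (seq j).1.Cs := by
    intro j l hjl
    induction l, hjl using Nat.le_induction with
    | base => rw [hseq j]; exact hnxt1 (seq j)
    | succ l hl ih =>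
        have h1 : (seq (l+1)).1.m ∈ (seq l).1.Cs := by rw [hseq l]; exact hnxt1 (seq l)
        exact hchain j l (Nat.le_of_lt hl) h1
  -- pigeonhole on finitely many pattern data
  haveI : Finite {x : Finset ℕ // x ⊆ F} :=
    Finite.of_injective (fun x => (⟨x.1, Finset.mem_powerset.2 x.2⟩ : ↥F.powerset))
      (fun a b hab => Subtype.ext (by simpa [Subtype.ext_iff] using hab))
  let φmap : ℕ → {x : Finset ℕ // x ⊆ F} × {x : Finset ℕ // x ⊆ F} × Bool :=
    fun j => (⟨(seq j).1.P, (seq j).2.2.2.2.1⟩, ⟨(seq j).1.Q, (seq j).2.2.2.2.2.1⟩, (seq j).1.b)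
  obtain ⟨⟨Pb, Qb, bb⟩, hfib⟩ := Finite.exists_infinite_fiber φmap
  have hJ : {j : ℕ | φmap j = (Pb, Qb, bb)}.Infinite := by
    rw [← Set.infinite_coe_iff]; exact hfib
  have hE_inf : ((fun j => (seq j).1.m) '' {j : ℕ | φmap j = (Pb, Qb, bb)}).Infinite :=
    hJ.image (Set.injOn_of_injective hmsm.injective)
  have hE_sub : ((fun j => (seq j).1.m) '' {j : ℕ | φmap j = (Pb, Qb, bb)}) ⊆ C := by
    rintro x ⟨j, -, rfl⟩; exact (seq j).2.1
  have hdisjb : Disjoint Pb.1 Qb.1 := by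
    obtain ⟨j₀, hj₀⟩ := hJ.nonempty
    have hd := (seq j₀).2.2.2.2.2.2.1
    have h1 : (seq j₀).1.P = Pb.1 := congrArg (fun t => t.1.1) hj₀
    have h2 : (seq j₀).1.Q = Qb.1 := congrArg (fun t => t.2.1.1) hj₀
    rwa [h1, h2] at hd
  obtain ⟨f, hfPat, hIA, hIB⟩ := hinv Pb.1 Qb.1 Pb.2 Qb.2 hdisjb _ hE_sub hE_inf
  -- find an index in the fiber where f is on the bb side
  have hside : ∃ jj, φmap jj = (Pb, Qb, bb) ∧
      f ∈ (bif bb then A ((seq jj).1.m) else B ((seq jj).1.m)) := by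
    cases bb with
    | true =>
        obtain ⟨x, hxE, hxA⟩ := hIA.nonempty
        obtain ⟨jj, hjj, rfl⟩ := hxE
        exact ⟨jj, hjj, hxA⟩
    | false =>
        obtain ⟨x, hxE, hxB⟩ := hIB.nonempty
        obtain ⟨jj, hjj, rfl⟩ := hxE
        exact ⟨jj, hjj, hxB⟩
  obtain ⟨jj, hjjJ, hjjside⟩ := hside
  have hC'inf : (((fun j => (seq j).1.m) '' {j : ℕ | φmap j = (Pb, Qb, bb)})
      ∩ Set.Ioi ((seq jj).1.m)).Infinite := inter_Ioi_infinite hE_inf _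
  have hC'Cs : (((fun j => (seq j).1.m) '' {j : ℕ | φmap j = (Pb, Qb, bb)})
      ∩ Set.Ioi ((seq jj).1.m)) ⊆ (seq jj).1.Cs := by
    rintro x ⟨⟨l, -, rfl⟩, hlt⟩
    exact hm_in jj l (hmsm.lt_iff_lt.1 hlt)
  have hosc : Osc A B (Pat A B Pb.1 Qb.1 ∩ (bif bb then A ((seq jj).1.m) else B ((seq jj).1.m)))
      (((fun j => (seq j).1.m) '' {j : ℕ | φmap j = (Pb, Qb, bb)}) ∩ Set.Ioi ((seq jj).1.m)) := by
    refine ⟨f, ⟨hfPat, hjjside⟩, ?_, ?_⟩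
    · refine (inter_Ioi_infinite hIA ((seq jj).1.m)).mono ?_
      rintro x ⟨⟨hxE, hxA⟩, hgt⟩
      exact ⟨⟨hxE, hgt⟩, hxA⟩
    · refine (inter_Ioi_infinite hIB ((seq jj).1.m)).mono ?_
      rintro x ⟨⟨hxE, hxB⟩, hgt⟩
      exact ⟨⟨hxE, hgt⟩, hxB⟩
  have hlast := (seq jj).2.2.2.2.2.2.2 _ hC'Cs hC'inf
  apply hlast
  have h1 : (seq jj).1.P = Pb.1 := congrArg (fun t => t.1.1) hjjJ
  have h2 : (seq jj).1.Q = Qb.1 := congrArg (fun t => t.2.1.1) hjjJ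
  have h3 : (seq jj).1.b = bb := congrArg (fun t => t.2.2) hjjJ
  rw [h1, h2, h3]
  exact hosc

/-- Main combinatorial theorem: from hereditary oscillation, an independent subsequence. -/
theorem fusion_main {M₀ : Set ℕ} (hM₀ : M₀.Infinite)
    (hH : ∀ C, C ⊆ M₀ → C.Infinite → Osc A B Set.univ C) :
    ∃ φ : ℕ → ℕ, StrictMono φ ∧ ∀ P Q : Finset ℕ, Disjoint P Q →
      (Pat A B (P.image φ) (Q.image φ)).Nonempty := by
  classical
  set GG : ℕ × Finset ℕ × Set ℕ → Prop := fun p =>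
    Inv A B p.2.1 p.2.2 ∧ p.2.2.Infinite ∧ (∀ x ∈ p.2.1, ∀ y ∈ p.2.2, x < y) with hGG
  have hbase : GG (0, ∅, M₀) := by
    refine ⟨?_, hM₀, by simp⟩
    intro P Q hP hQ hdisj C' hC' hC'inf
    rw [Finset.subset_empty.1 hP, Finset.subset_empty.1 hQ]
    have : Pat A B ∅ ∅ = (Set.univ : Set α) := by
      ext f; simp [Pat]
    rw [this]
    exact hH C' hC' hC'inf
  have hstep : ∀ p : {p : ℕ × Finset ℕ × Set ℕ // GG p},
      ∃ q : {p : ℕ × Finset ℕ × Set ℕ // GG p},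
        q.1.2.1 = insert q.1.1 p.1.2.1 ∧ q.1.1 ∈ p.1.2.2 ∧ q.1.2.2 ⊆ p.1.2.2 := by
    rintro ⟨⟨dummy, F, C⟩, hinv, hCinf, hord⟩
    obtain ⟨n, hn, Cp, hCp, hCpinf, hCpinv⟩ := extend hCinf hinv
    refine ⟨⟨⟨n, insert n F, Cp⟩, hCpinv, hCpinf, ?_⟩, rfl, hn, fun x hx => (hCp hx).1⟩
    intro x hx y hy
    rcases Finset.mem_insert.1 hx with rfl | hxF
    · exact (hCp hy).2
    · exact hord x hxF y ((hCp hy).1)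
  choose nxt hnxt1 hnxt2 hnxt3 using hstep
  let gseq : ℕ → {p : ℕ × Finset ℕ × Set ℕ // GG p} :=
    fun k => Nat.rec (⟨(0, ∅, M₀), hbase⟩ : {p : ℕ × Finset ℕ × Set ℕ // GG p})
      (fun _ p => nxt p) k
  have hgseq : ∀ k, gseq (k+1) = nxt (gseq k) := fun _ => rfl
  -- φ k is the element inserted at step k
  refine ⟨fun k => (gseq (k+1)).1.1, ?_, ?_⟩
  · apply strictMono_nat_of_lt_succ
    intro k
    -- (gseq (k+2)).1.1 ∈ (gseq (k+1)).1.2.2 and everything there is > elements of F_{k+1}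
    have h1 : (gseq (k+2)).1.1 ∈ (gseq (k+1)).1.2.2 := by
      rw [hgseq (k+1)]; exact hnxt2 (gseq (k+1))
    have h2 : (gseq (k+1)).1.2.1 = insert ((gseq (k+1)).1.1) ((gseq k).1.2.1) := by
      rw [hgseq k]; exact hnxt1 (gseq k)
    have h3 := (gseq (k+1)).2.2.2
    exact h3 _ (h2 ▸ Finset.mem_insert_self _ _) _ h1
  · -- independence
    intro P Q hdisj
    -- F grows and contains all φ j for j < k
    have hFmono : ∀ k, (gseq k).1.2.1 ⊆ (gseq (k+1)).1.2.1 := by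
      intro k
      have h2 : (gseq (k+1)).1.2.1 = insert ((gseq (k+1)).1.1) ((gseq k).1.2.1) := by
        rw [hgseq k]; exact hnxt1 (gseq k)
      rw [h2]; exact Finset.subset_insert _ _
    have hFchain : ∀ j k, j ≤ k → (gseq j).1.2.1 ⊆ (gseq k).1.2.1 := by
      intro j k hjk
      induction k, hjk using Nat.le_induction with
      | base => exact fun x hx => hx
      | succ k hk ih => exact fun x hx => hFmono k (ih hx)
    have hmem : ∀ j k, j < k → (gseq (j+1)).1.1 ∈ (gseq k).1.2.1 := by
      intro j k hjk
      have h2 : (gseq (j+1)).1.2.1 = insert ((gseq (j+1)).1.1) ((gseq j).1.2.1) := by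
        rw [hgseq j]; exact hnxt1 (gseq j)
      have : (gseq (j+1)).1.1 ∈ (gseq (j+1)).1.2.1 := h2 ▸ Finset.mem_insert_self _ _
      exact hFchain (j+1) k hjk this
    set K := (P ∪ Q).sup id + 1 with hK
    have hPK : P.image (fun k => (gseq (k+1)).1.1) ⊆ (gseq K).1.2.1 := by
      intro x hx
      obtain ⟨j, hjP, rfl⟩ := Finset.mem_image.1 hx
      refine hmem j K ?_
      have : j ≤ (P ∪ Q).sup id := Finset.le_sup (f := id) (Finset.mem_union_left _ hjP)
      omega
    have hQK : Q.image (fun k => (gseq (k+1)).1.1) ⊆ (gseq K).1.2.1 := by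
      intro x hx
      obtain ⟨j, hjQ, rfl⟩ := Finset.mem_image.1 hx
      refine hmem j K ?_
      have : j ≤ (P ∪ Q).sup id := Finset.le_sup (f := id) (Finset.mem_union_right _ hjQ)
      omega
    have hinj : Function.Injective (fun k => (gseq (k+1)).1.1) := by
      have : StrictMono (fun k => (gseq (k+1)).1.1) := by
        apply strictMono_nat_of_lt_succ
        intro k
        have h1 : (gseq (k+2)).1.1 ∈ (gseq (k+1)).1.2.2 := by
          rw [hgseq (k+1)]; exact hnxt2 (gseq (k+1))
        have h2 : (gseq (k+1)).1.2.1 = insert ((gseq (k+1)).1.1) ((gseq k).1.2.1) := by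
          rw [hgseq k]; exact hnxt1 (gseq k)
        exact (gseq (k+1)).2.2.2 _ (h2 ▸ Finset.mem_insert_self _ _) _ h1
      exact this.injective
    have hdisjim : Disjoint (P.image (fun k => (gseq (k+1)).1.1))
        (Q.image (fun k => (gseq (k+1)).1.1)) :=
      Finset.disjoint_image hinj |>.2 hdisj
    obtain ⟨ff, hff, -, -⟩ := (gseq K).2.1 _ _ hPK hQK hdisjim _
      (fun x hx => hx) (gseq K).2.2.1
    exact ⟨ff, hff⟩

end Fusion


noncomputable def eps (b : Bool) : ℝ := bif b then 1 else -1

theorem eps_mul_self (b : Bool) : eps b * eps b = 1 := by cases b <;> simp [eps]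

theorem abs_eps (b : Bool) : |eps b| = 1 := by cases b <;> simp [eps]

theorem eps_not (b : Bool) : eps (!b) = - eps b := by cases b <;> simp [eps]

def extb {N : ℕ} (σ : Fin N → Bool) (j : ℕ) : Bool :=
  if h : j < N then σ ⟨j, h⟩ else false

theorem rademacher_orth {N : ℕ} {j k : ℕ} (hj : j < N) (hk : k < N) :
    ∑ σ : Fin N → Bool, eps (extb σ j) * eps (extb σ k)
      = if j = k then (2^N : ℝ) else 0 := by
  rcases eq_or_ne j k with rfl | hne
  · simp only [if_pos rfl]
    have : ∀ σ : Fin N → Bool, eps (extb σ j) * eps (extb σ j) = 1 :=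
      fun σ => eps_mul_self _
    rw [Finset.sum_congr rfl (fun σ _ => this σ), Finset.sum_const, Finset.card_univ]
    simp [Fintype.card_fun]
  · rw [if_neg hne]
    refine Finset.sum_involution
      (fun σ _ => Function.update σ ⟨j, hj⟩ (! σ ⟨j, hj⟩)) ?_ ?_ (fun σ _ => Finset.mem_univ _) ?_
    · intro σ _
      have h1 : extb (Function.update σ ⟨j, hj⟩ (! σ ⟨j, hj⟩)) j = ! extb σ j := by
        simp [extb, dif_pos hj, Function.update_self]
      have hki : (⟨k, hk⟩ : Fin N) ≠ ⟨j, hj⟩ := fun hcon => hne (congrArg Fin.val hcon).symm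
      have h2 : extb (Function.update σ ⟨j, hj⟩ (! σ ⟨j, hj⟩)) k = extb σ k := by
        simp only [extb, dif_pos hk]
        rw [Function.update_of_ne hki]
      rw [h1, h2, eps_not]
      ring
    · intro σ _ hσ
      intro hcon
      have h5 := congrFun hcon ⟨j, hj⟩
      simp only [Function.update_self] at h5
      exact (Bool.not_ne_self _) h5
    · intro σ _
      funext i
      rcases eq_or_ne i ⟨j, hj⟩ with rfl | hi
      · simp [Function.update_self]
      · simp [Function.update_of_ne hi]

theorem rademacher_sum_sq {N : ℕ} (FS : Finset ℕ) (hFS : ∀ j ∈ FS, j < N) (a : ℕ → ℝ) :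
    ∑ σ : Fin N → Bool, (∑ j ∈ FS, a j * eps (extb σ j))^2
      = (2^N : ℝ) * ∑ j ∈ FS, (a j)^2 := by
  have expand : ∀ σ : Fin N → Bool, (∑ j ∈ FS, a j * eps (extb σ j))^2
      = ∑ j ∈ FS, ∑ k ∈ FS, (a j * a k) * (eps (extb σ j) * eps (extb σ k)) := by
    intro σ
    rw [sq, Finset.sum_mul_sum]
    apply Finset.sum_congr rfl; intro j _
    apply Finset.sum_congr rfl; intro k _
    ring
  rw [Finset.sum_congr rfl (fun σ _ => expand σ), Finset.sum_comm]
  have swap2 : ∀ j ∈ FS, (∑ σ : Fin N → Bool, ∑ k ∈ FS,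
      (a j * a k) * (eps (extb σ j) * eps (extb σ k)))
      = ∑ k ∈ FS, (a j * a k) * (∑ σ : Fin N → Bool, eps (extb σ j) * eps (extb σ k)) := by
    intro j _
    rw [Finset.sum_comm]
    apply Finset.sum_congr rfl; intro k _
    rw [Finset.mul_sum]
  rw [Finset.sum_congr rfl swap2]
  have diag : ∀ j ∈ FS, (∑ k ∈ FS, (a j * a k) *
      (∑ σ : Fin N → Bool, eps (extb σ j) * eps (extb σ k))) = (a j)^2 * 2^N := by
    intro j hj
    rw [Finset.sum_eq_single j]
    · rw [rademacher_orth (hFS j hj) (hFS j hj), if_pos rfl]; ring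
    · intro k hk hkj
      rw [rademacher_orth (hFS j hj) (hFS k hk), if_neg (Ne.symm hkj), mul_zero]
    · intro hcon; exact absurd hj hcon
  rw [Finset.sum_congr rfl diag, ← Finset.sum_mul]
  ring


theorem hyper_eventually_gt (j : ℕ) :
    ∀ᶠ N in (Filter.hyperfilter ℕ : Filter ℕ), j < N := by
  have h : {N : ℕ | ¬ j < N}.Finite := by
    have : {N : ℕ | ¬ j < N} = Set.Iic j := by ext n; simp [Set.mem_Iic, not_lt]
    rw [this]; exact Set.finite_Iic j
  have := Filter.compl_mem_hyperfilter_of_finite h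
  rw [Filter.eventually_iff]
  convert this using 1
  simp [Set.compl_setOf]

theorem card_bool_fun (N : ℕ) : (Finset.univ : Finset (Fin N → Bool)).card = 2^N := by
  rw [Finset.card_univ]
  simp [Fintype.card_fun]

set_option maxHeartbeats 1000000 in
theorem machine {X Y : Type*} [NormedAddCommGroup X] [NormedSpace ℝ X]
    [NormedAddCommGroup Y] [NormedSpace ℝ Y]
    (T : X →L[ℝ] Y) (x : ℕ → X) (hx : ∀ n, ‖x n‖ ≤ 1)
    (r s : ℝ) (hrs : r < s)
    (hpat : ∀ P Q : Finset ℕ, Disjoint P Q → ∃ h : Y →L[ℝ] ℝ, ‖h‖ ≤ 1 ∧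
      (∀ i ∈ P, s < h (T (x i))) ∧ (∀ i ∈ Q, h (T (x i)) < r))
    (hXS : ∀ f : ℕ → (X →L[ℝ] ℝ),
      (∀ G : (X →L[ℝ] ℝ) →L[ℝ] ℝ, Tendsto (fun n => G (f n)) atTop (𝓝 (G 0))) →
      Tendsto f atTop (𝓝 0)) :
    False := by
  classical
  set β := (s - r)/2 with hβ
  have hβpos : 0 < β := by rw [hβ]; linarith
  -- pattern functionals
  have hsel : ∀ (N : ℕ) (σ : Fin N → Bool), ∃ h : Y →L[ℝ] ℝ, ‖h‖ ≤ 1 ∧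
      (∀ j, j < N → extb σ j = true → s < h (T (x j))) ∧
      (∀ j, j < N → extb σ j = false → h (T (x j)) < r) := by
    intro N σ
    obtain ⟨h, h1, h2, h3⟩ := hpat ((Finset.range N).filter (fun j => extb σ j = true))
      ((Finset.range N).filter (fun j => extb σ j = false))
      (by
        rw [Finset.disjoint_left]
        intro a ha hb
        rw [Finset.mem_filter] at ha hb
        rw [ha.2] at hb
        exact absurd hb.2 (by simp))
    refine ⟨h, h1, fun j hj hσ => ?_, fun j hj hσ => ?_⟩
    · exact h2 j (Finset.mem_filter.2 ⟨Finset.mem_range.2 hj, hσ⟩)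
    · exact h3 j (Finset.mem_filter.2 ⟨Finset.mem_range.2 hj, hσ⟩)
  choose hbf hb1 hb2 hb3 using hsel
  -- antisymmetrization
  set hcf : ∀ N : ℕ, (Fin N → Bool) → (Y →L[ℝ] ℝ) :=
    fun N σ => (2:ℝ)⁻¹ • (hbf N σ - hbf N (fun i => ! σ i)) with hhcf
  have hextnot : ∀ (N : ℕ) (σ : Fin N → Bool) (j : ℕ), j < N →
      extb (fun i => ! σ i) j = ! extb σ j := by
    intro N σ j hj; simp [extb, dif_pos hj]
  have hcnorm : ∀ N σ, ‖hcf N σ‖ ≤ 1 := by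
    intro N σ
    rw [hhcf]
    have h := norm_smul (α := ℝ) ((2:ℝ)⁻¹) (hbf N σ - hbf N (fun i => ! σ i))
    rw [h]
    have := norm_sub_le (hbf N σ) (hbf N (fun i => ! σ i))
    have h1 := hb1 N σ
    have h2 := hb1 N (fun i => ! σ i)
    rw [norm_inv, Real.norm_ofNat]
    nlinarith [norm_nonneg (hbf N σ - hbf N (fun i => ! σ i))]
  have hcval : ∀ (N : ℕ) (σ : Fin N → Bool) (j : ℕ), j < N →
      β ≤ eps (extb σ j) * hcf N σ (T (x j)) := by
    intro N σ j hj
    have happ : hcf N σ (T (x j)) =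
        (2:ℝ)⁻¹ * (hbf N σ (T (x j)) - hbf N (fun i => ! σ i) (T (x j))) := by
      rw [hhcf]
      simp [ContinuousLinearMap.smul_apply, ContinuousLinearMap.sub_apply, smul_eq_mul]
    cases hσj : extb σ j with
    | true =>
        have hv1 := hb2 N σ j hj hσj
        have hv2 := hb3 N (fun i => ! σ i) j hj (by rw [hextnot N σ j hj, hσj]; rfl)
        rw [happ]
        simp only [eps, cond_true, one_mul, hβ]
        linarith
    | false =>
        have hv1 := hb3 N σ j hj hσj
        have hv2 := hb2 N (fun i => ! σ i) j hj (by rw [hextnot N σ j hj, hσj]; rfl)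
        rw [happ]
        simp only [eps, cond_false, hβ]
        nlinarith
  -- level-N averaged functionals
  set gs : ℕ → ℕ → Y → ℝ :=
    fun j N u => (2^N : ℝ)⁻¹ * ∑ σ : Fin N → Bool, eps (extb σ j) * hcf N σ u with hgs
  have htermbd : ∀ (j N : ℕ) (u : Y) (σ : Fin N → Bool),
      |eps (extb σ j) * hcf N σ u| ≤ ‖u‖ := by
    intro j N u σ
    rw [abs_mul, abs_eps, one_mul]
    calc |hcf N σ u| ≤ ‖hcf N σ‖ * ‖u‖ := (hcf N σ).le_opNorm u
      _ ≤ 1 * ‖u‖ := mul_le_mul_of_nonneg_right (hcnorm N σ) (norm_nonneg u)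
      _ = ‖u‖ := one_mul _
  have hgb : ∀ (j N : ℕ) (u : Y), |gs j N u| ≤ ‖u‖ := by
    intro j N u
    rw [hgs]
    simp only []
    rw [abs_mul, abs_inv, abs_pow, abs_two]
    calc (2^N : ℝ)⁻¹ * |∑ σ : Fin N → Bool, eps (extb σ j) * hcf N σ u|
        ≤ (2^N : ℝ)⁻¹ * ∑ σ : Fin N → Bool, |eps (extb σ j) * hcf N σ u| := by
          apply mul_le_mul_of_nonneg_left (Finset.abs_sum_le_sum_abs _ _) (by positivity)
      _ ≤ (2^N : ℝ)⁻¹ * ∑ _σ : Fin N → Bool, ‖u‖ := by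
          apply mul_le_mul_of_nonneg_left (Finset.sum_le_sum (fun σ _ => htermbd j N u σ)) (by positivity)
      _ = (2^N : ℝ)⁻¹ * (2^N * ‖u‖) := by
          rw [Finset.sum_const, card_bool_fun, nsmul_eq_mul]
          push_cast
          ring
      _ = ‖u‖ := by
          field_simp
  -- the limiting functionals
  have hGlin : ∀ j : ℕ, ∃ G : Y →L[ℝ] ℝ, (∀ u, G u = ulim (fun N => gs j N u)) ∧ ‖G‖ ≤ 1 := by
    intro j
    have hadd : ∀ u v : Y, ulim (fun N => gs j N (u + v))
        = ulim (fun N => gs j N u) + ulim (fun N => gs j N v) := by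
      intro u v
      have he : (fun N => gs j N (u + v)) = fun N => gs j N u + gs j N v := by
        funext N
        rw [hgs]
        simp only [map_add]
        rw [← mul_add, ← Finset.sum_add_distrib]
        congr 1
        apply Finset.sum_congr rfl
        intro σ _
        ring
      rw [he]
      exact ulim_eq ((ulim_spec (fun N => hgb j N u)).add (ulim_spec (fun N => hgb j N v)))
    have hsmul : ∀ (c : ℝ) (u : Y), ulim (fun N => gs j N (c • u))
        = c * ulim (fun N => gs j N u) := by
      intro c u
      have he : (fun N => gs j N (c • u)) = fun N => c * gs j N u := by
        funext N
        rw [hgs]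
        simp only [map_smul, smul_eq_mul, Finset.mul_sum]
        exact Finset.sum_congr rfl fun σ _ => by ring
      rw [he]
      exact ulim_eq ((ulim_spec (fun N => hgb j N u)).const_mul c)
    set L : Y →ₗ[ℝ] ℝ :=
      { toFun := fun u => ulim (fun N => gs j N u)
        map_add' := hadd
        map_smul' := hsmul } with hL
    have hbd : ∀ u, ‖L u‖ ≤ 1 * ‖u‖ := by
      intro u
      rw [one_mul, Real.norm_eq_abs]
      have ht := ulim_spec (fun N => hgb j N u)
      rw [abs_le]
      constructor
      · exact ge_of_tendsto ht (Filter.Eventually.of_forall (fun N => (abs_le.1 (hgb j N u)).1))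
      · exact le_of_tendsto ht (Filter.Eventually.of_forall (fun N => (abs_le.1 (hgb j N u)).2))
    exact ⟨L.mkContinuous 1 hbd, fun u => rfl, (L.mkContinuous 1 hbd).opNorm_le_bound zero_le_one hbd |>.trans (by norm_num)⟩
  choose G hGu hGn using hGlin
  have hterm2 : ∀ (N : ℕ) (σ : Fin N → Bool) (u : Y), |hcf N σ u| ≤ ‖u‖ := by
    intro N σ u
    calc |hcf N σ u| ≤ ‖hcf N σ‖ * ‖u‖ := (hcf N σ).le_opNorm u
      _ ≤ 1 * ‖u‖ := mul_le_mul_of_nonneg_right (hcnorm N σ) (norm_nonneg u)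
      _ = ‖u‖ := one_mul _
  -- lower bound (a)
  have hGa : ∀ j, β ≤ G j (T (x j)) := by
    intro j
    rw [hGu]
    have ht := ulim_spec (fun N => hgb j N (T (x j)))
    apply ge_of_tendsto ht
    filter_upwards [hyper_eventually_gt j] with N hN
    rw [hgs]
    simp only []
    have hsum : (2^N : ℝ) * β ≤ ∑ σ : Fin N → Bool, eps (extb σ j) * hcf N σ (T (x j)) := by
      have := Finset.sum_le_sum (fun σ (_ : σ ∈ (Finset.univ : Finset (Fin N → Bool))) =>
        hcval N σ j hN)
      rw [Finset.sum_const, card_bool_fun, nsmul_eq_mul] at this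
      calc (2^N : ℝ) * β = ((2^N : ℕ) : ℝ) * β := by push_cast; ring
        _ ≤ _ := this
    calc β = (2^N : ℝ)⁻¹ * ((2^N :ℝ) * β) := by field_simp
      _ ≤ (2^N : ℝ)⁻¹ * ∑ σ : Fin N → Bool, eps (extb σ j) * hcf N σ (T (x j)) := by
          apply mul_le_mul_of_nonneg_left hsum (by positivity)
  -- upper ℓ² estimate (b)
  have hGb : ∀ (FS : Finset ℕ) (a : ℕ → ℝ),
      ‖∑ j ∈ FS, a j • G j‖ ≤ Real.sqrt (∑ j ∈ FS, (a j)^2) := by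
    intro FS a
    apply ContinuousLinearMap.opNorm_le_bound _ (Real.sqrt_nonneg _)
    intro u
    have hev : (∑ j ∈ FS, a j • G j) u = ∑ j ∈ FS, a j * G j u := by
      rw [ContinuousLinearMap.sum_apply]
      exact Finset.sum_congr rfl fun j _ => rfl
    rw [hev, Real.norm_eq_abs]
    set S := ∑ j ∈ FS, (a j)^2 with hS
    have hS0 : 0 ≤ S := Finset.sum_nonneg fun _ _ => sq_nonneg _
    have hts : Tendsto (fun N => ∑ j ∈ FS, a j * gs j N u) (Filter.hyperfilter ℕ : Filter ℕ)
        (𝓝 (∑ j ∈ FS, a j * G j u)) := by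
      apply tendsto_finset_sum
      intro j _
      rw [hGu j u]
      exact (ulim_spec (fun N => hgb j N u)).const_mul (a j)
    have hbnd : ∀ᶠ N in (Filter.hyperfilter ℕ : Filter ℕ),
        |∑ j ∈ FS, a j * gs j N u| ≤ Real.sqrt S * ‖u‖ := by
      filter_upwards [hyper_eventually_gt (FS.sup id)] with N hN
      have hFSN : ∀ j ∈ FS, j < N := fun j hj =>
        lt_of_le_of_lt (Finset.le_sup (f := id) hj) hN
      have hre : ∑ j ∈ FS, a j * gs j N u
          = (2^N : ℝ)⁻¹ * ∑ σ : Fin N → Bool, (∑ j ∈ FS, a j * eps (extb σ j)) * hcf N σ u := by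
        rw [hgs]
        simp only [Finset.mul_sum, Finset.sum_mul]
        rw [Finset.sum_comm]
        exact Finset.sum_congr rfl fun σ _ => Finset.sum_congr rfl fun j _ => by ring
      rw [hre]
      have habs : |(2^N : ℝ)⁻¹ * ∑ σ : Fin N → Bool,
            (∑ j ∈ FS, a j * eps (extb σ j)) * hcf N σ u|
          ≤ (2^N:ℝ)⁻¹ * ∑ σ : Fin N → Bool, |∑ j ∈ FS, a j * eps (extb σ j)| * ‖u‖ := by
        rw [abs_mul, abs_inv, abs_pow, abs_two]
        apply mul_le_mul_of_nonneg_left _ (by positivity)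
        refine (Finset.abs_sum_le_sum_abs _ _).trans (Finset.sum_le_sum fun σ _ => ?_)
        rw [abs_mul]
        exact mul_le_mul_of_nonneg_left (hterm2 N σ u) (abs_nonneg _)
      have hcs : ∑ σ : Fin N → Bool, |∑ j ∈ FS, a j * eps (extb σ j)|
          ≤ (2^N : ℝ) * Real.sqrt S := by
        have h2 := Finset.sum_mul_sq_le_sq_mul_sq Finset.univ
          (fun _ : Fin N → Bool => (1:ℝ)) (fun σ => |∑ j ∈ FS, a j * eps (extb σ j)|)
        simp only [one_mul, one_pow] at h2
        have he1 : ∑ _σ : Fin N → Bool, (1:ℝ) = 2^N := by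
          rw [Finset.sum_const, card_bool_fun, nsmul_eq_mul]; push_cast; ring
        have he2 : ∑ σ : Fin N → Bool, |∑ j ∈ FS, a j * eps (extb σ j)|^2 = (2^N) * S := by
          rw [hS, ← rademacher_sum_sq FS hFSN a]
          exact Finset.sum_congr rfl fun σ _ => sq_abs _
        rw [he1, he2] at h2
        have hnn : 0 ≤ ∑ σ : Fin N → Bool, |∑ j ∈ FS, a j * eps (extb σ j)| :=
          Finset.sum_nonneg fun _ _ => abs_nonneg _
        have hy : 0 ≤ ((2:ℝ)^N)^2 * S := by positivity
        have hstep : ∑ σ : Fin N → Bool, |∑ j ∈ FS, a j * eps (extb σ j)|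
            ≤ Real.sqrt (((2:ℝ)^N)^2 * S) := by
          rw [Real.le_sqrt hnn hy]
          calc (∑ σ : Fin N → Bool, |∑ j ∈ FS, a j * eps (extb σ j)|)^2
              ≤ 2^N * (2^N * S) := h2
            _ = ((2:ℝ)^N)^2 * S := by ring
        calc ∑ σ : Fin N → Bool, |∑ j ∈ FS, a j * eps (extb σ j)|
            ≤ Real.sqrt (((2:ℝ)^N)^2 * S) := hstep
          _ = (2^N : ℝ) * Real.sqrt S := by
              rw [Real.sqrt_mul (sq_nonneg _), Real.sqrt_sq (by positivity)]
      calc |(2^N : ℝ)⁻¹ * ∑ σ : Fin N → Bool,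
            (∑ j ∈ FS, a j * eps (extb σ j)) * hcf N σ u|
          ≤ (2^N:ℝ)⁻¹ * ∑ σ : Fin N → Bool, |∑ j ∈ FS, a j * eps (extb σ j)| * ‖u‖ := habs
        _ = (2^N:ℝ)⁻¹ * (∑ σ : Fin N → Bool, |∑ j ∈ FS, a j * eps (extb σ j)|) * ‖u‖ := by
            rw [← Finset.sum_mul]; ring
        _ ≤ (2^N:ℝ)⁻¹ * ((2^N : ℝ) * Real.sqrt S) * ‖u‖ := by
            apply mul_le_mul_of_nonneg_right _ (norm_nonneg u)
            apply mul_le_mul_of_nonneg_left hcs (by positivity)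
        _ = Real.sqrt S * ‖u‖ := by field_simp
    exact le_of_tendsto hts.abs hbnd
  -- the pulled-back sequence in the dual of X
  set f : ℕ → (X →L[ℝ] ℝ) := fun j => (G j).comp T with hf
  have hupper : ∀ (FS : Finset ℕ) (a : ℕ → ℝ),
      ‖∑ j ∈ FS, a j • f j‖ ≤ Real.sqrt (∑ j ∈ FS, (a j)^2) * ‖T‖ := by
    intro FS a
    have hcomp : ∑ j ∈ FS, a j • f j = (∑ j ∈ FS, a j • G j).comp T := by
      ext u
      rw [ContinuousLinearMap.sum_apply, ContinuousLinearMap.comp_apply,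
        ContinuousLinearMap.sum_apply]
      exact Finset.sum_congr rfl fun j _ => rfl
    rw [hcomp]
    calc ‖(∑ j ∈ FS, a j • G j).comp T‖ ≤ ‖∑ j ∈ FS, a j • G j‖ * ‖T‖ :=
        ContinuousLinearMap.opNorm_comp_le _ _
      _ ≤ Real.sqrt (∑ j ∈ FS, (a j)^2) * ‖T‖ :=
        mul_le_mul_of_nonneg_right (hGb FS a) (norm_nonneg T)
  have hlow : ∀ j, β ≤ ‖f j‖ := by
    intro j
    have h1 : β ≤ f j (x j) := hGa j
    calc β ≤ f j (x j) := h1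
      _ ≤ |f j (x j)| := le_abs_self _
      _ ≤ ‖f j‖ * ‖x j‖ := (f j).le_opNorm _
      _ ≤ ‖f j‖ * 1 := mul_le_mul_of_nonneg_left (hx j) (norm_nonneg _)
      _ = ‖f j‖ := mul_one _
  -- weak nullity
  have hweak : ∀ Gd : (X →L[ℝ] ℝ) →L[ℝ] ℝ,
      Tendsto (fun j => Gd (f j)) atTop (𝓝 0) := by
    intro Gd
    set K := ‖Gd‖ * ‖T‖ with hK
    have hK0 : 0 ≤ K := mul_nonneg Gd.opNorm_nonneg T.opNorm_nonneg
    have hsumbd : ∀ n : ℕ, ∑ j ∈ Finset.range n, (Gd (f j))^2 ≤ K^2 := by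
      intro n
      set S := ∑ j ∈ Finset.range n, (Gd (f j))^2 with hSd
      have hS0 : 0 ≤ S := Finset.sum_nonneg fun _ _ => sq_nonneg _
      have hGS : Gd (∑ j ∈ Finset.range n, (Gd (f j)) • f j) = S := by
        rw [map_sum]
        apply Finset.sum_congr rfl
        intro j _
        rw [map_smul, smul_eq_mul, sq]
      have hb1' : |S| ≤ ‖Gd‖ * ‖∑ j ∈ Finset.range n, (Gd (f j)) • f j‖ := by
        rw [← hGS, ← Real.norm_eq_abs]
        exact Gd.le_opNorm _
      have hb2' := hupper (Finset.range n) (fun j => Gd (f j))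
      have hb3' : S ≤ K * Real.sqrt S := by
        calc S ≤ |S| := le_abs_self _
          _ ≤ ‖Gd‖ * ‖∑ j ∈ Finset.range n, (Gd (f j)) • f j‖ := hb1'
          _ ≤ ‖Gd‖ * (Real.sqrt S * ‖T‖) :=
              mul_le_mul_of_nonneg_left hb2' Gd.opNorm_nonneg
          _ = K * Real.sqrt S := by rw [hK]; ring
      nlinarith [Real.sq_sqrt hS0, Real.sqrt_nonneg S, sq_nonneg (Real.sqrt S - K)]
    have hsummable : Summable (fun j => (Gd (f j))^2) :=
      summable_of_sum_range_le (fun j => sq_nonneg _) hsumbd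
    have hsq : Tendsto (fun j => (Gd (f j))^2) atTop (𝓝 0) :=
      hsummable.tendsto_atTop_zero
    have habs : Tendsto (fun j => |Gd (f j)|) atTop (𝓝 0) := by
      have := (Real.continuous_sqrt.tendsto 0).comp hsq
      rw [Real.sqrt_zero] at this
      convert this using 2 with j
      rw [Function.comp_apply, Real.sqrt_sq_eq_abs]
    apply squeeze_zero_norm _ habs
    intro j
    rw [Real.norm_eq_abs]
  have hnull : Tendsto f atTop (𝓝 0) := by
    apply hXS
    intro Gd
    rw [map_zero]
    exact hweak Gd
  have hnorm0 : Tendsto (fun j => ‖f j‖) atTop (𝓝 0) := by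
    have := hnull.norm
    rwa [norm_zero] at this
  obtain ⟨j, hj⟩ := (hnorm0.eventually_lt_const hβpos).exists
  exact absurd (hlow j) (not_le.2 hj)


section Wrapper

variable {W : Type*} [NormedAddCommGroup W] [NormedSpace ℝ W]

/-- Rosenthal's dichotomy. -/
theorem rosenthal_dichotomy (y : ℕ → W) (R : ℝ) (hb : ∀ n, ‖y n‖ ≤ R) :
    (∃ φ : ℕ → ℕ, StrictMono φ ∧ ∀ f : W →L[ℝ] ℝ,
        ∃ L, Tendsto (fun n => f (y (φ n))) atTop (𝓝 L)) ∨
    (∃ (φ : ℕ → ℕ) (r s : ℝ), StrictMono φ ∧ r < s ∧ ∀ P Q : Finset ℕ, Disjoint P Q →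
      ∃ h : W →L[ℝ] ℝ, ‖h‖ ≤ 1 ∧ (∀ i ∈ P, s < h (y (φ i))) ∧ (∀ i ∈ Q, h (y (φ i)) < r)) := by
  classical
  by_cases hgood : ∃ (r s : ℚ), (r:ℝ) < s ∧ ∃ M₀ : Set ℕ, M₀.Infinite ∧
      ∀ C, C ⊆ M₀ → C.Infinite → ∃ f : W →L[ℝ] ℝ, ‖f‖ ≤ 1 ∧
        {n | n ∈ C ∧ (s:ℝ) < f (y n)}.Infinite ∧ {n | n ∈ C ∧ f (y n) < (r:ℝ)}.Infinite
  · -- independence branch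
    right
    obtain ⟨r, s, hrs, M₀, hM₀, hosc⟩ := hgood
    set A : ℕ → Set (W →L[ℝ] ℝ) := fun n => {f | ‖f‖ ≤ 1 ∧ (s:ℝ) < f (y n)} with hA
    set B : ℕ → Set (W →L[ℝ] ℝ) := fun n => {f | ‖f‖ ≤ 1 ∧ f (y n) < (r:ℝ)} with hB
    have hH : ∀ C, C ⊆ M₀ → C.Infinite → Osc A B Set.univ C := by
      intro C hC hCinf
      obtain ⟨f, hf1, hf2, hf3⟩ := hosc C hC hCinf
      refine ⟨f, Set.mem_univ f, ?_, ?_⟩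
      · exact hf2.mono (fun n hn => ⟨hn.1, hf1, hn.2⟩)
      · exact hf3.mono (fun n hn => ⟨hn.1, hf1, hn.2⟩)
    obtain ⟨φ, hφ, hind⟩ := fusion_main hM₀ hH
    refine ⟨φ, r, s, hφ, hrs, ?_⟩
    intro P Q hdisj
    obtain ⟨ff, hff⟩ := hind P Q hdisj
    have hffP := hff.1
    have hffQ := hff.2
    rcases Finset.eq_empty_or_nonempty (P ∪ Q) with hPQ | ⟨i₀, hi₀⟩
    · rw [Finset.union_eq_empty] at hPQ
      refine ⟨0, by simp, ?_, ?_⟩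
      · intro i hi; rw [hPQ.1] at hi; exact absurd hi (Finset.notMem_empty i)
      · intro i hi; rw [hPQ.2] at hi; exact absurd hi (Finset.notMem_empty i)
    · have hffnorm : ‖ff‖ ≤ 1 := by
        rcases Finset.mem_union.1 hi₀ with h | h
        · exact (hffP (φ i₀) (Finset.mem_image_of_mem φ h)).1
        · exact (hffQ (φ i₀) (Finset.mem_image_of_mem φ h)).1
      exact ⟨ff, hffnorm,
        fun i hi => (hffP (φ i) (Finset.mem_image_of_mem φ hi)).2,
        fun i hi => (hffQ (φ i) (Finset.mem_image_of_mem φ hi)).2⟩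
  · -- weakly Cauchy branch
    left
    push_neg at hgood
    have hbad : ∀ (p : ℚ × ℚ), ∀ M₀ : Set ℕ, M₀.Infinite →
        ∃ C, C ⊆ M₀ ∧ C.Infinite ∧ (((p.1:ℝ) < (p.2:ℝ)) → ∀ f : W →L[ℝ] ℝ, ‖f‖ ≤ 1 →
          ¬({n | n ∈ C ∧ (p.2:ℝ) < f (y n)}.Infinite ∧
            {n | n ∈ C ∧ f (y n) < (p.1:ℝ)}.Infinite)) := by
      rintro ⟨r, s⟩ M₀ hM₀
      by_cases hrs : (r:ℝ) < s
      · obtain ⟨C, hC, hCinf, hfprop⟩ := hgood r s hrs M₀ hM₀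
        exact ⟨C, hC, hCinf, fun _ f hf hboth => hboth.2 (hfprop f hf hboth.1)⟩
      · exact ⟨M₀, fun x hx => hx, hM₀, fun h => absurd h hrs⟩
    choose Cfun hC1 hC2 hC3 using hbad
    set e : ℕ → ℚ × ℚ := fun i => (Denumerable.eqv (ℚ × ℚ)).symm i with he
    have hesurj : Function.Surjective e := (Denumerable.eqv (ℚ × ℚ)).symm.surjective
    -- the chain
    let Mseq : ℕ → {M : Set ℕ // M.Infinite} :=
      fun i => Nat.rec ⟨Set.univ, Set.infinite_univ⟩
        (fun i M => ⟨Cfun (e i) M.1 M.2, hC2 (e i) M.1 M.2⟩) i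
    have hMseq : ∀ i, (Mseq (i+1)).1 = Cfun (e i) (Mseq i).1 (Mseq i).2 := fun _ => rfl
    have hMsub : ∀ i, (Mseq (i+1)).1 ⊆ (Mseq i).1 := by
      intro i; rw [hMseq i]; exact hC1 (e i) (Mseq i).1 (Mseq i).2
    have hMchain : ∀ j l, j ≤ l → (Mseq l).1 ⊆ (Mseq j).1 := by
      intro j l hjl
      induction l, hjl using Nat.le_induction with
      | base => exact fun x hx => hx
      | succ l hl ih => exact fun x hx => ih (hMsub l hx)
    -- the diagonal sequence
    have hdstep : ∀ k (a : ℕ), ∃ b, b ∈ (Mseq (k+2)).1 ∧ a < b := by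
      intro k a
      obtain ⟨b, hb1, hb2⟩ := (Mseq (k+2)).2.exists_gt a
      exact ⟨b, hb1, hb2⟩
    choose db hdb1 hdb2 using hdstep
    obtain ⟨d0, hd01, -⟩ := (Mseq 1).2.exists_gt 0
    let d : ℕ → ℕ := fun k => Nat.rec d0 (fun k prev => db k prev) k
    have hdsucc : ∀ k, d (k+1) = db k (d k) := fun _ => rfl
    have hdmem : ∀ k, d k ∈ (Mseq (k+1)).1 := by
      intro k
      cases k with
      | zero => exact hd01
      | succ k => rw [hdsucc k]; exact hdb1 k (d k)
    have hdmono : StrictMono d := by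
      apply strictMono_nat_of_lt_succ
      intro k; rw [hdsucc k]; exact hdb2 k (d k)
    refine ⟨d, hdmono, ?_⟩
    -- every functional gives a convergent sequence along d
    have key : ∀ f : W →L[ℝ] ℝ, ‖f‖ ≤ 1 → ∃ L, Tendsto (fun n => f (y (d n))) atTop (𝓝 L) := by
      intro f hf
      by_contra hnc
      have hbnd : ∀ n, |f (y (d n))| ≤ max R 1 := by
        intro n
        calc |f (y (d n))| ≤ ‖f‖ * ‖y (d n)‖ := f.le_opNorm _
          _ ≤ 1 * max R 1 := by
              apply mul_le_mul hf ((hb _).trans (le_max_left _ _)) (norm_nonneg _) zero_le_one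
          _ = max R 1 := one_mul _
      obtain ⟨r, s, hrs, hblw, habv⟩ := osc_of_not_tendsto hbnd hnc
      obtain ⟨i, hi⟩ := hesurj (r, s)
      have hprop := hC3 (e i) (Mseq i).1 (Mseq i).2 (by rw [hi]; exact_mod_cast hrs) f hf
      apply hprop
      have hdin : ∀ k, i ≤ k → d k ∈ Cfun (e i) (Mseq i).1 (Mseq i).2 := by
        intro k hk
        rw [← hMseq i]
        exact hMchain (i+1) (k+1) (by omega) (hdmem k)
      constructor
      · have h1 : ({k | (s:ℝ) < f (y (d k))} ∩ Set.Ici i).Infinite := by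
          have : {k | (s:ℝ) < f (y (d k))} ∩ Set.Ici i
              = {k | (s:ℝ) < f (y (d k))} \ Set.Iio i := by
            ext n; simp [Set.mem_Ici, Set.mem_Iio, not_lt]
          rw [this]; exact habv.diff (Set.finite_Iio i)
        refine (h1.image (Set.injOn_of_injective hdmono.injective)).mono ?_
        rintro x ⟨k, ⟨hk1, hk2⟩, rfl⟩
        refine ⟨hdin k hk2, ?_⟩
        rw [hi]
        exact hk1
      · have h1 : ({k | f (y (d k)) < (r:ℝ)} ∩ Set.Ici i).Infinite := by
          have : {k | f (y (d k)) < (r:ℝ)} ∩ Set.Ici i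
              = {k | f (y (d k)) < (r:ℝ)} \ Set.Iio i := by
            ext n; simp [Set.mem_Ici, Set.mem_Iio, not_lt]
          rw [this]; exact hblw.diff (Set.finite_Iio i)
        refine (h1.image (Set.injOn_of_injective hdmono.injective)).mono ?_
        rintro x ⟨k, ⟨hk1, hk2⟩, rfl⟩
        refine ⟨hdin k hk2, ?_⟩
        rw [hi]
        exact hk1
    -- scale to arbitrary functionals
    intro f
    rcases eq_or_ne f 0 with rfl | hf0
    · exact ⟨0, by simp only [ContinuousLinearMap.zero_apply]; exact tendsto_const_nhds⟩
    · have hfn : ‖f‖ ≠ 0 := norm_ne_zero_iff.2 hf0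
      have hnorm1 : ‖(‖f‖⁻¹ • f : W →L[ℝ] ℝ)‖ ≤ 1 := by
        have h := norm_smul (α := ℝ) (‖f‖⁻¹) f
        rw [h, norm_inv, norm_norm, inv_mul_cancel₀ hfn]
      obtain ⟨L, hL⟩ := key (‖f‖⁻¹ • f) hnorm1
      refine ⟨‖f‖ * L, ?_⟩
      have := hL.const_mul ‖f‖
      convert this using 2 with n
      simp only [ContinuousLinearMap.smul_apply, smul_eq_mul]
      field_simp
  

end Wrapper

end Stmt2Aux


variable {X : Type*} [NormedAddCommGroup X] [NormedSpace ℝ X] [CompleteSpace X]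
variable {Y : Type*} [NormedAddCommGroup Y] [NormedSpace ℝ Y] [CompleteSpace Y]

/-- If the dual of `X` and `Y` both have the Schur property, then every bounded linear
operator `T : X → Y` is compact. -/
theorem stmt2 (hX : SchurProperty (X →L[ℝ] ℝ)) (hY : SchurProperty Y) (T : X →L[ℝ] Y) :
    CompactOp T := by
  rw [CompactOp, isCompact_iff_totallyBounded_isComplete]
  refine ⟨TotallyBounded.closure ?_, isClosed_closure.isComplete⟩
  by_contra hTB
  obtain ⟨ε, u, hε, huS, husep⟩ := Stmt2Aux.exists_separated_seq hTB
  have hpre : ∀ n, ∃ x : X, ‖x‖ ≤ 1 ∧ T x = u n := by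
    intro n
    obtain ⟨x, hx, hTx⟩ := huS n
    exact ⟨x, mem_closedBall_zero_iff.1 hx, hTx⟩
  choose x hx1 hx2 using hpre
  have hub : ∀ n, ‖T (x n)‖ ≤ ‖T‖ := by
    intro n
    calc ‖T (x n)‖ ≤ ‖T‖ * ‖x n‖ := T.le_opNorm _
      _ ≤ ‖T‖ * 1 := mul_le_mul_of_nonneg_left (hx1 n) T.opNorm_nonneg
      _ = ‖T‖ := mul_one _
  rcases Stmt2Aux.rosenthal_dichotomy (fun n => T (x n)) ‖T‖ hub with
    ⟨φ, hφ, hwc⟩ | ⟨φ, r, s, hφ, hrs, hpat⟩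
  · -- a weakly Cauchy subsequence: contradicts the Schur property of Y
    have hWC : WeakConvTo (fun k => T (x (φ (2*k))) - T (x (φ (2*k+1)))) 0 := by
      intro g
      obtain ⟨L, hL⟩ := hwc g
      have hm1 : StrictMono (fun k : ℕ => 2*k) := by
        intro a b hab; dsimp only; omega
      have hm2 : StrictMono (fun k : ℕ => 2*k+1) := by
        intro a b hab; dsimp only; omega
      have h1 : Tendsto (fun k => g (T (x (φ (2*k))))) atTop (𝓝 L) :=
        hL.comp hm1.tendsto_atTop
      have h2 : Tendsto (fun k => g (T (x (φ (2*k+1))))) atTop (𝓝 L) :=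
        hL.comp hm2.tendsto_atTop
      rw [map_zero]
      have h3 := h1.sub h2
      rw [sub_self] at h3
      convert h3 using 2 with k
      rw [map_sub]
    have hnull := hY _ 0 hWC
    have hnorm0 : Tendsto (fun k => ‖T (x (φ (2*k))) - T (x (φ (2*k+1)))‖) atTop (𝓝 0) := by
      have := hnull.norm
      rwa [norm_zero] at this
    obtain ⟨k, hk⟩ := (hnorm0.eventually_lt_const hε).exists
    have hne : φ (2*k) ≠ φ (2*k+1) := by
      intro hcon
      exact absurd (hφ.injective hcon) (by omega)
    have hdist := husep (φ (2*k)) (φ (2*k+1)) hne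
    rw [dist_eq_norm, ← hx2 (φ (2*k)), ← hx2 (φ (2*k+1))] at hdist
    exact absurd hdist (not_le.2 hk)
  · -- the independent-family branch: contradicts the Schur property of the dual of X
    exact Stmt2Aux.machine T (fun n => x (φ n)) (fun n => hx1 _) r s hrs
      (fun P Q hdisj => hpat P Q hdisj)
      (fun f hwk => hX f 0 hwk)
end

section
/- Let X and Y be Banach spaces over ℝ. If X is hereditarily-ℓ¹ and Y is almost reflexive, then every bounded linear operator T : X → Y is strictly singular. -/
open Filter Topology

set_option synthInstance.maxHeartbeats 1000000
set_option maxHeartbeats 1000000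

section Aux

lemma ellone_summable (x : EllOne) : Summable (fun k => ‖x k‖) := by
  have h : (0:ℝ) < (1 : ENNReal).toReal := by simp
  have := lp.hasSum_norm h x
  simp only [ENNReal.toReal_one, Real.rpow_one] at this
  exact this.summable

lemma ellone_norm (x : EllOne) : ‖x‖ = ∑' k, ‖x k‖ := by
  have h : (0:ℝ) < (1 : ENNReal).toReal := by simp
  have := lp.norm_eq_tsum_rpow h x
  simpa using this

lemma mul_summable (a : ℕ → ℝ) (ha : ∀ k, |a k| ≤ 1) (x : EllOne) :
    Summable (fun k => a k * x k) := by
  refine (ellone_summable x).of_norm_bounded (fun k => ?_)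
  rw [norm_mul, Real.norm_eq_abs]
  calc |a k| * ‖x k‖ ≤ 1 * ‖x k‖ := by gcongr; exact ha k
    _ = ‖x k‖ := one_mul _

/-- The bounded functional on `ℓ¹` given by a sequence of coefficients bounded by 1. -/
noncomputable def mulFunc (a : ℕ → ℝ) (ha : ∀ k, |a k| ≤ 1) : EllOne →L[ℝ] ℝ := by
  refine LinearMap.mkContinuous
    { toFun := fun x => ∑' k, a k * x k
      map_add' := fun x y => ?_
      map_smul' := fun c x => ?_ } 1 fun x => ?_
  · show (∑' k, a k * (x + y) k) = (∑' k, a k * x k) + (∑' k, a k * y k)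
    have : (fun k => a k * (x + y) k) = fun k => a k * x k + a k * y k := by
      funext k; simp [lp.coeFn_add, mul_add]
    rw [this]
    exact Summable.tsum_add (mul_summable a ha x) (mul_summable a ha y)
  · show (∑' k, a k * (c • x) k) = c • ∑' k, a k * x k
    have : (fun k => a k * (c • x) k) = fun k => c * (a k * x k) := by
      funext k; simp [lp.coeFn_smul]; ring
    rw [this]
    simp [tsum_mul_left]
  · simp only [LinearMap.coe_mk, AddHom.coe_mk, one_mul]
    rw [ellone_norm]
    calc ‖∑' k, a k * x k‖ ≤ ∑' k, ‖a k * x k‖ :=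
          norm_tsum_le_tsum_norm ((mul_summable a ha x).norm)
      _ ≤ ∑' k, ‖x k‖ := by
          refine Summable.tsum_le_tsum (fun k => ?_) (mul_summable a ha x).norm (ellone_summable x)
          rw [norm_mul, Real.norm_eq_abs]
          calc |a k| * ‖x k‖ ≤ 1 * ‖x k‖ := by gcongr; exact ha k
            _ = ‖x k‖ := one_mul _

lemma mulFunc_single (a : ℕ → ℝ) (ha : ∀ k, |a k| ≤ 1) (i : ℕ) :
    mulFunc a ha (lp.single 1 i (1:ℝ)) = a i := by
  simp only [mulFunc, LinearMap.mkContinuous_apply, LinearMap.coe_mk, AddHom.coe_mk]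
  have : (fun k => a k * (lp.single 1 i (1:ℝ) : ∀ _:ℕ, ℝ) k)
      = fun k => if k = i then a i else 0 := by
    funext k
    by_cases h : k = i
    · subst h; simp [lp.single_apply_self]
    · simp [lp.single_apply_ne _ _ _ h, h]
  rw [this, tsum_ite_eq]

end Aux

variable {X : Type*} [NormedAddCommGroup X] [NormedSpace ℝ X] [CompleteSpace X]
variable {Y : Type*} [NormedAddCommGroup Y] [NormedSpace ℝ Y] [CompleteSpace Y]

/-- If `X` is hereditarily-ℓ¹ and `Y` is almost reflexive, then every bounded linear operator
`T : X → Y` is strictly singular. -/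
theorem stmt6 (hX : HereditarilyEllOne X) (hY : AlmostReflexive Y) (T : X →L[ℝ] Y) :
    StrictlySingular T := by
  classical
  intro X₀ hclosed hfd hiso
  obtain ⟨c, hc, hbound⟩ := hiso
  obtain ⟨Z, hZle, hZclosed, ⟨e⟩⟩ := hX X₀ hclosed hfd
  set z : ℕ → Z := fun n => e.symm (lp.single 1 n 1) with hz
  have htoReal : (0:ℝ) < (1 : ENNReal).toReal := by simp
  have hsingle : ∀ n : ℕ, ‖(lp.single 1 n (1:ℝ) : EllOne)‖ = 1 := by
    intro n
    have := lp.norm_single (E := fun _ : ℕ => ℝ) (p := 1) one_pos n (1:ℝ)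
    simpa using this
  have hbd : ∃ C : ℝ, ∀ n, ‖T ((z n : X))‖ ≤ C := by
    refine ⟨‖T‖ * ‖(e.symm : EllOne →L[ℝ] Z)‖, fun n => ?_⟩
    calc ‖T (z n : X)‖ ≤ ‖T‖ * ‖(z n : X)‖ := T.le_opNorm _
      _ = ‖T‖ * ‖z n‖ := rfl
      _ ≤ ‖T‖ * (‖(e.symm : EllOne →L[ℝ] Z)‖ * ‖(lp.single 1 n (1:ℝ) : EllOne)‖) := by
          gcongr
          exact (e.symm : EllOne →L[ℝ] Z).le_opNorm _
      _ = ‖T‖ * ‖(e.symm : EllOne →L[ℝ] Z)‖ := by rw [hsingle n, mul_one]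
  obtain ⟨φ, hφ, hwc⟩ := hY (fun n => T ((z n : X))) hbd
  set a : ℕ → ℝ := fun k => if ∃ m, φ (2*m) = k then 1 else 0 with hadef
  have ha : ∀ k, |a k| ≤ 1 := by
    intro k; simp only [hadef]; split_ifs <;> norm_num
  set f := mulFunc a ha with hf
  set g₀ : Z →L[ℝ] ℝ := f.comp (e : Z →L[ℝ] EllOne) with hg₀
  -- Build an extension H of the functional g₀ ∘ (T|_Z)⁻¹
  set Sop : Z →L[ℝ] Y := T.comp (Z.subtypeL) with hSop
  have hSlow : ∀ w : Z, c * ‖w‖ ≤ ‖Sop w‖ := fun w => hbound w (hZle w.2)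
  have hSinj : Function.Injective Sop := by
    intro u v huv
    have h0 : Sop (u - v) = 0 := by rw [map_sub, huv, sub_self]
    have h1 := hSlow (u - v)
    rw [h0, norm_zero] at h1
    have h2 : ‖u - v‖ ≤ 0 := by nlinarith [norm_nonneg (u - v)]
    have h3 : u - v = 0 := by rw [← norm_le_zero_iff]; exact h2
    exact sub_eq_zero.mp h3
  set W : Subspace ℝ Y := LinearMap.range (Sop : Z →ₗ[ℝ] Y) with hW
  set Eqv : Z ≃ₗ[ℝ] W := LinearEquiv.ofInjective (Sop : Z →ₗ[ℝ] Y) hSinj with hEqv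
  set ψ : W →ₗ[ℝ] ℝ := g₀.toLinearMap ∘ₗ Eqv.symm.toLinearMap with hψ
  have hψbound : ∀ w : W, ‖ψ w‖ ≤ (‖g₀‖ * c⁻¹) * ‖w‖ := by
    intro w
    set u : Z := Eqv.symm w with hu
    have hwu : (w : Y) = Sop u := by
      conv_lhs => rw [← Eqv.apply_symm_apply w]
      exact LinearEquiv.ofInjective_apply (h := hSinj) (f := (Sop : Z →ₗ[ℝ] Y)) u
    have hnorm : c * ‖u‖ ≤ ‖w‖ := by
      have h4 : ‖w‖ = ‖(w : Y)‖ := rfl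
      rw [h4, hwu]; exact hSlow u
    have hcu : ‖u‖ ≤ c⁻¹ * ‖w‖ := by
      rw [← div_eq_inv_mul, le_div_iff₀ hc]
      linarith
    calc ‖ψ w‖ = ‖g₀ u‖ := rfl
      _ ≤ ‖g₀‖ * ‖u‖ := g₀.le_opNorm u
      _ ≤ ‖g₀‖ * (c⁻¹ * ‖w‖) :=
          mul_le_mul_of_nonneg_left hcu (ContinuousLinearMap.opNorm_nonneg g₀)
      _ = (‖g₀‖ * c⁻¹) * ‖w‖ := by ring
  set h : W →L[ℝ] ℝ := ψ.mkContinuous (‖g₀‖ * c⁻¹) hψbound with hh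
  obtain ⟨H, hH, -⟩ := exists_extension_norm_eq W h
  have key : ∀ w : Z, H (T (w : X)) = g₀ w := by
    intro w
    have hmem : T (w : X) ∈ W := ⟨w, rfl⟩
    have h1 : H (T (w : X)) = h ⟨T (w : X), hmem⟩ := hH ⟨T (w : X), hmem⟩
    rw [h1]
    show ψ ⟨T (w : X), hmem⟩ = g₀ w
    have h2 : Eqv.symm ⟨T (w : X), hmem⟩ = w := by
      rw [LinearEquiv.symm_apply_eq]
      apply Subtype.ext
      rw [hEqv, LinearEquiv.ofInjective_apply]
      rfl
    show g₀ (Eqv.symm ⟨T (w : X), hmem⟩) = g₀ w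
    rw [h2]
  obtain ⟨L, hL⟩ := hwc H
  have hval : ∀ n, H (T ((z (φ n) : X))) = a (φ n) := by
    intro n
    rw [key (z (φ n))]
    show f (e (e.symm (lp.single 1 (φ n) 1))) = a (φ n)
    rw [e.apply_symm_apply]
    exact mulFunc_single a ha (φ n)
  have haval : ∀ n, a (φ n) = if Even n then 1 else 0 := by
    intro n
    by_cases hn : Even n
    · rw [if_pos hn]
      obtain ⟨m, hm⟩ := hn
      simp only [hadef]
      rw [if_pos ⟨m, by congr 1; omega⟩]
    · rw [if_neg hn]
      simp only [hadef]
      rw [if_neg]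
      rintro ⟨m, hm⟩
      have h5 := hφ.injective hm
      exact hn ⟨m, by omega⟩
  have hfun : (fun n => H (((fun n => T ((z n : X))) ∘ φ) n))
      = fun n => if Even n then (1:ℝ) else 0 := by
    funext n
    exact (hval n).trans (haval n)
  rw [hfun] at hL
  have heven : Tendsto (fun m : ℕ => 2*m) atTop atTop :=
    StrictMono.tendsto_atTop (fun p q hpq => by omega)
  have hodd : Tendsto (fun m : ℕ => 2*m+1) atTop atTop :=
    StrictMono.tendsto_atTop (fun p q hpq => by omega)
  have hL1 : Tendsto (fun m : ℕ => if Even (2*m) then (1:ℝ) else 0) atTop (𝓝 L) :=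
    hL.comp heven
  have hL0 : Tendsto (fun m : ℕ => if Even (2*m+1) then (1:ℝ) else 0) atTop (𝓝 L) :=
    hL.comp hodd
  have hL1' : (fun m : ℕ => if Even (2*m) then (1:ℝ) else 0) = fun _ => (1:ℝ) := by
    funext m; rw [if_pos ⟨m, by omega⟩]
  have hL0' : (fun m : ℕ => if Even (2*m+1) then (1:ℝ) else 0) = fun _ => (0:ℝ) := by
    funext m
    rw [if_neg]
    rintro ⟨p, hp⟩
    omega
  rw [hL1'] at hL1
  rw [hL0'] at hL0
  have e1 : L = 1 := tendsto_nhds_unique hL1 tendsto_const_nhds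
  have e0 : L = 0 := tendsto_nhds_unique hL0 tendsto_const_nhds
  rw [e1] at e0
  norm_num at e0
end

section
/- Let X be a Banach space over ℝ that is almost reflexive. Then every bounded linear operator T : X → ℓ¹ is strictly singular. -/
open Filter Topology

section Aux

lemma ellone_hasSum_norm (f : EllOne) : HasSum (fun i => ‖f i‖) ‖f‖ := by
  have := lp.hasSum_norm (p := (1 : ENNReal)) (by norm_num) f
  simpa using this

lemma ellone_summable_norm (f : EllOne) : Summable fun i => ‖f i‖ :=
  (ellone_hasSum_norm f).summable

lemma ellone_norm_eq (f : EllOne) : ‖f‖ = ∑' i, ‖f i‖ :=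
  (ellone_hasSum_norm f).tsum_eq.symm

lemma summable_mul_ell (b : ℕ → ℝ) (hb : ∀ i, |b i| ≤ 1) (y : EllOne) :
    Summable fun i => b i * y i := by
  apply Summable.of_norm_bounded (ellone_summable_norm y)
  intro i
  simp only [Real.norm_eq_abs, abs_mul]
  nlinarith [abs_nonneg (y i), abs_nonneg (b i), hb i]

lemma summable_abs_mul_ell (b : ℕ → ℝ) (hb : ∀ i, |b i| ≤ 1) (y : EllOne) :
    Summable fun i => ‖b i * y i‖ := by
  simpa only [Real.norm_eq_abs] using (summable_mul_ell b hb y).abs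

noncomputable def sumCLM (b : ℕ → ℝ) (hb : ∀ i, |b i| ≤ 1) : EllOne →L[ℝ] ℝ :=
  LinearMap.mkContinuous
    { toFun := fun y => ∑' i, b i * y i
      map_add' := by
        intro y z
        show ∑' i, b i * (y + z) i = (∑' i, b i * y i) + ∑' i, b i * z i
        rw [← Summable.tsum_add (summable_mul_ell b hb y) (summable_mul_ell b hb z)]
        apply tsum_congr
        intro i
        simp [mul_add]
      map_smul' := by
        intro c y
        show ∑' i, b i * (c • y) i = c * ∑' i, b i * y i
        rw [← tsum_mul_left]
        apply tsum_congr
        intro i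
        simp; ring } 1
    (by
      intro y
      simp only [LinearMap.coe_mk, AddHom.coe_mk, one_mul]
      calc ‖∑' i, b i * y i‖ ≤ ∑' i, ‖b i * y i‖ :=
            norm_tsum_le_tsum_norm (summable_abs_mul_ell b hb y)
        _ ≤ ∑' i, ‖y i‖ := by
            apply Summable.tsum_le_tsum _ (summable_abs_mul_ell b hb y) (ellone_summable_norm y)
            intro i
            simp only [Real.norm_eq_abs, abs_mul]
            nlinarith [abs_nonneg (y i), abs_nonneg (b i), hb i]
        _ = ‖y‖ := (ellone_norm_eq y).symm)

lemma sumCLM_apply (b : ℕ → ℝ) (hb : ∀ i, |b i| ≤ 1) (y : EllOne) :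
    sumCLM b hb y = ∑' i, b i * y i := rfl


lemma coord_one (i : ℕ) : ∀ j : ℕ, |(if j = i then (1:ℝ) else 0)| ≤ 1 := by
  intro j; split_ifs <;> norm_num

lemma sumCLM_coord (i : ℕ) (y : EllOne) :
    sumCLM (fun j => if j = i then (1:ℝ) else 0) (coord_one i) y = y i := by
  rw [sumCLM_apply]
  have h : ∀ j, (if j = i then (1:ℝ) else 0) * y j = if j = i then y i else 0 := by
    intro j; split_ifs with hj
    · subst hj; simp
    · simp
  rw [tsum_congr h]
  exact tsum_ite_eq i (fun _ => y i)

lemma schur_contra (y : ℕ → EllOne)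
    (hnull : ∀ f : EllOne →L[ℝ] ℝ, Tendsto (fun k => f (y k)) atTop (𝓝 0))
    {ε : ℝ} (hε : 0 < ε) (hy : ∀ k, ε ≤ ‖y k‖) : False := by
  have hcoord : ∀ i : ℕ, Tendsto (fun k => y k i) atTop (𝓝 0) := by
    intro i
    have := hnull (sumCLM (fun j => if j = i then (1:ℝ) else 0) (coord_one i))
    simpa [sumCLM_coord] using this
  have hA : ∀ m j : ℕ, ∃ k, j ≤ k ∧ ∑ i ∈ Finset.range m, ‖y k i‖ < ε/8 := by
    intro m j
    have hsum : Tendsto (fun k => ∑ i ∈ Finset.range m, ‖y k i‖) atTop (𝓝 0) := by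
      have := tendsto_finset_sum (Finset.range m)
        (fun i (_ : i ∈ Finset.range m) => ((hcoord i).norm : _))
      simpa using this
    have h1 : ∀ᶠ k in atTop, ∑ i ∈ Finset.range m, ‖y k i‖ < ε/8 :=
      hsum.eventually (eventually_lt_nhds (by positivity : (0:ℝ) < ε/8))
    obtain ⟨k, hk1, hk2⟩ := ((eventually_ge_atTop j).and h1).exists
    exact ⟨k, hk1, hk2⟩
  have hB : ∀ k m : ℕ, ∃ M, m < M ∧ ∑' i, ‖y k (i + M)‖ < ε/8 := by
    intro k m
    have htail : Tendsto (fun M => ∑' i, ‖y k (i + M)‖) atTop (𝓝 0) :=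
      tendsto_sum_nat_add (fun n => ‖y k n‖)
    have h1 : ∀ᶠ M in atTop, ∑' i, ‖y k (i + M)‖ < ε/8 :=
      htail.eventually (eventually_lt_nhds (by positivity : (0:ℝ) < ε/8))
    obtain ⟨M, hM1, hM2⟩ := ((eventually_gt_atTop m).and h1).exists
    exact ⟨M, hM1, hM2⟩
  choose K hK1 hK2 using hA
  choose Mf hMf1 hMf2 using hB
  obtain ⟨m, hm0, hmsucc⟩ : ∃ m : ℕ → ℕ, m 0 = 0 ∧
      ∀ j, m (j+1) = Mf (K (m j) j) (m j) :=
    ⟨fun j => Nat.rec 0 (fun j mj => Mf (K mj j) mj) j, rfl, fun j => rfl⟩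
  set k : ℕ → ℕ := fun j => K (m j) j with hk_def
  have hmono : StrictMono m := by
    apply strictMono_nat_of_lt_succ
    intro j
    rw [hmsucc]
    exact hMf1 _ _
  have hjm : ∀ j, j ≤ m j := fun j => hmono.le_apply
  have hkj : ∀ j, j ≤ k j := fun j => hK1 (m j) j
  have hhead : ∀ j, ∑ i ∈ Finset.range (m j), ‖y (k j) i‖ < ε/8 := fun j => hK2 (m j) j
  have htail : ∀ j, ∑' i, ‖y (k j) (i + m (j+1))‖ < ε/8 := by
    intro j
    rw [hmsucc]
    exact hMf2 _ _
  -- the index map J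
  obtain ⟨J, hJ1, hJ2⟩ : ∃ J : ℕ → ℕ, (∀ i, i < m (J i + 1)) ∧
      ∀ i j', j' < J i → m (j' + 1) ≤ i := by
    have hex : ∀ i : ℕ, ∃ j, i < m (j + 1) := fun i =>
      ⟨i, lt_of_lt_of_le (Nat.lt_succ_self i) (hjm (i+1))⟩
    refine ⟨fun i => Nat.find (hex i), fun i => Nat.find_spec (hex i), ?_⟩
    intro i j' hj'
    have := Nat.find_min (hex i) hj'
    omega
  have hJ_eq : ∀ j i, m j ≤ i → i < m (j+1) → J i = j := by
    intro j i h1 h2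
    rcases lt_trichotomy (J i) j with h | h | h
    · exact absurd (lt_of_lt_of_le (hJ1 i) (hmono.monotone h)) (not_lt.mpr h1)
    · exact h
    · exact absurd (hJ2 i j h) (not_le.mpr h2)
  set b : ℕ → ℝ := fun i => if 0 ≤ y (k (J i)) i then 1 else -1 with hb_def
  have hb : ∀ i, |b i| ≤ 1 := by
    intro i; simp only [hb_def]; split_ifs <;> norm_num
  have hbabs : ∀ (i : ℕ) (z : ℝ), |b i| ≤ 1 → |b i * z| ≤ |z| := by
    intro i z h
    rw [abs_mul]
    nlinarith [abs_nonneg z, abs_nonneg (b i)]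
  have hbnorm : ∀ j i, m j ≤ i → i < m (j+1) → b i * y (k j) i = ‖y (k j) i‖ := by
    intro j i h1 h2
    have hJ : J i = j := hJ_eq j i h1 h2
    simp only [hb_def, hJ]
    split_ifs with h
    · simp [Real.norm_eq_abs, abs_of_nonneg h]
    · push_neg at h
      simp [Real.norm_eq_abs, abs_of_neg h]
  set F := sumCLM b hb with hF_def
  have hkey : ∀ j, ε/2 ≤ F (y (k j)) := by
    intro j
    set g : ℕ → ℝ := fun i => b i * y (k j) i with hg_def
    have hgsum : Summable g := summable_mul_ell b hb (y (k j))
    have hgabs : ∀ i, |g i| ≤ ‖y (k j) i‖ := by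
      intro i
      simp only [hg_def, Real.norm_eq_abs]
      exact hbabs i _ (hb i)
    have hsplit : F (y (k j)) =
        (∑ i ∈ Finset.range (m (j+1)), g i) + ∑' i, g (i + m (j+1)) := by
      rw [hF_def, sumCLM_apply]
      exact (Summable.sum_add_tsum_nat_add (m (j+1)) hgsum).symm
    have hsplit2 : ∑ i ∈ Finset.range (m (j+1)), g i =
        (∑ i ∈ Finset.range (m j), g i) + ∑ i ∈ Finset.Ico (m j) (m (j+1)), g i := by
      simp only [Finset.range_eq_Ico]
      exact (Finset.sum_Ico_consecutive _ (Nat.zero_le _) (hmono (Nat.lt_succ_self j)).le).symm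
    have hS1 : |∑ i ∈ Finset.range (m j), g i| ≤ ∑ i ∈ Finset.range (m j), ‖y (k j) i‖ :=
      (Finset.abs_sum_le_sum_abs _ _).trans
        (Finset.sum_le_sum fun i _ => hgabs i)
    have hsum2 : Summable fun i => ‖y (k j) (i + m (j+1))‖ :=
      (summable_nat_add_iff (f := fun n => ‖y (k j) n‖) (m (j+1))).mpr
        (ellone_summable_norm (y (k j)))
    have hS3 : |∑' i, g (i + m (j+1))| ≤ ∑' i, ‖y (k j) (i + m (j+1))‖ := by
      have hsum1 : Summable fun i => ‖g (i + m (j+1))‖ := by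
        apply hsum2.of_nonneg_of_le (fun i => norm_nonneg _)
        intro i
        simpa [Real.norm_eq_abs] using hgabs (i + m (j+1))
      calc |∑' i, g (i + m (j+1))| ≤ ∑' i, ‖g (i + m (j+1))‖ :=
            norm_tsum_le_tsum_norm hsum1
        _ ≤ ∑' i, ‖y (k j) (i + m (j+1))‖ := by
            apply Summable.tsum_le_tsum _ hsum1 hsum2
            intro i
            simpa [Real.norm_eq_abs] using hgabs (i + m (j+1))
    have hS2eq : ∑ i ∈ Finset.Ico (m j) (m (j+1)), g i =
        ∑ i ∈ Finset.Ico (m j) (m (j+1)), ‖y (k j) i‖ := by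
      apply Finset.sum_congr rfl
      intro i hi
      rw [Finset.mem_Ico] at hi
      exact hbnorm j i hi.1 hi.2
    have hfull : (∑ i ∈ Finset.range (m (j+1)), ‖y (k j) i‖) +
        ∑' i, ‖y (k j) (i + m (j+1))‖ = ‖y (k j)‖ := by
      rw [ellone_norm_eq]
      exact Summable.sum_add_tsum_nat_add (m (j+1)) (ellone_summable_norm (y (k j)))
    have hfullsplit : ∑ i ∈ Finset.range (m (j+1)), ‖y (k j) i‖ =
        (∑ i ∈ Finset.range (m j), ‖y (k j) i‖) +
          ∑ i ∈ Finset.Ico (m j) (m (j+1)), ‖y (k j) i‖ := by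
      simp only [Finset.range_eq_Ico]
      exact (Finset.sum_Ico_consecutive _ (Nat.zero_le _) (hmono (Nat.lt_succ_self j)).le).symm
    have h1 := hhead j
    have h2 := htail j
    have h3 := hy (k j)
    have hS2lb : ε - ε/8 - ε/8 ≤ ∑ i ∈ Finset.Ico (m j) (m (j+1)), ‖y (k j) i‖ := by
      have heq : ∑ i ∈ Finset.Ico (m j) (m (j+1)), ‖y (k j) i‖ =
          ‖y (k j)‖ - (∑ i ∈ Finset.range (m j), ‖y (k j) i‖)
            - ∑' i, ‖y (k j) (i + m (j+1))‖ := by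
        rw [← hfull, hfullsplit]; ring
      rw [heq]
      linarith
    rw [hsplit, hsplit2, hS2eq]
    have e1 : -(ε/8) ≤ ∑ i ∈ Finset.range (m j), g i := by
      have := neg_abs_le (∑ i ∈ Finset.range (m j), g i)
      linarith
    have e3 : -(ε/8) ≤ ∑' i, g (i + m (j+1)) := by
      have := neg_abs_le (∑' i, g (i + m (j+1)))
      linarith
    linarith
  have hktend : Tendsto k atTop atTop := tendsto_atTop_mono hkj tendsto_id
  have hcomp : Tendsto (fun j => F (y (k j))) atTop (𝓝 0) := (hnull F).comp hktend
  have hev : ∀ᶠ j in atTop, F (y (k j)) < ε/2 :=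
    hcomp.eventually (eventually_lt_nhds (by positivity : (0:ℝ) < ε/2))
  obtain ⟨j, hj⟩ := hev.exists
  linarith [hkey j]

end Aux

variable {X : Type*} [NormedAddCommGroup X] [NormedSpace ℝ X] [CompleteSpace X]
variable {Y : Type*} [NormedAddCommGroup Y] [NormedSpace ℝ Y] [CompleteSpace Y]

/-- If `X` is almost reflexive, every bounded linear operator `T : X → ℓ¹` is strictly
singular. -/
theorem stmt7 (hX : AlmostReflexive X) (T : X →L[ℝ] EllOne) : StrictlySingular T := by
  intro X₀ hcl hfd h
  obtain ⟨c, hc, hT⟩ := h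
  obtain ⟨R, u, hR, huR, husep⟩ := exists_seq_norm_le_one_le_norm_sub (𝕜 := ℝ) (E := X₀) hfd
  set x : ℕ → X := fun n => (u n : X) with hx_def
  have hbdd : ∃ C : ℝ, ∀ n, ‖x n‖ ≤ C :=
    ⟨R, fun n => le_trans (le_of_eq (AddSubgroupClass.coe_norm (s := X₀) (u n)).symm) (huR n)⟩
  obtain ⟨φ, hφ, hwc⟩ := hX x hbdd
  set y : ℕ → EllOne := fun n => T (x (φ (2*n+1))) - T (x (φ (2*n))) with hy_def
  have hodd : Tendsto (fun n : ℕ => 2*n+1) atTop atTop :=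
    tendsto_atTop_atTop.2 fun b => ⟨b, fun a ha => by omega⟩
  have heven : Tendsto (fun n : ℕ => 2*n) atTop atTop :=
    tendsto_atTop_atTop.2 fun b => ⟨b, fun a ha => by omega⟩
  have hnull : ∀ f : EllOne →L[ℝ] ℝ, Tendsto (fun n => f (y n)) atTop (𝓝 0) := by
    intro f
    obtain ⟨L, hL⟩ := hwc (f.comp T)
    have h1 : Tendsto (fun n => f (T (x (φ (2*n+1))))) atTop (𝓝 L) := hL.comp hodd
    have h2 : Tendsto (fun n => f (T (x (φ (2*n))))) atTop (𝓝 L) := hL.comp heven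
    have := h1.sub h2
    simpa [hy_def, map_sub] using this
  have hlow : ∀ n, c ≤ ‖y n‖ := by
    intro n
    have hne : φ (2*n+1) ≠ φ (2*n) := by
      intro hcontra
      have := hφ.injective hcontra
      omega
    have hd : (1:ℝ) ≤ ‖u (φ (2*n+1)) - u (φ (2*n))‖ := husep hne
    have hmem : x (φ (2*n+1)) - x (φ (2*n)) ∈ X₀ := sub_mem (u _).2 (u _).2
    have hnorm : ‖x (φ (2*n+1)) - x (φ (2*n))‖ = ‖u (φ (2*n+1)) - u (φ (2*n))‖ := by
      exact (AddSubgroupClass.coe_norm (s := X₀) (u (φ (2*n+1)) - u (φ (2*n))))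
    calc c = c * 1 := (mul_one c).symm
      _ ≤ c * ‖x (φ (2*n+1)) - x (φ (2*n))‖ := by
          rw [hnorm]; nlinarith
      _ ≤ ‖T (x (φ (2*n+1)) - x (φ (2*n)))‖ := hT _ hmem
      _ = ‖y n‖ := by rw [hy_def]; simp [map_sub]
  exact schur_contra y hnull hc hlow
end

section
/- Let X and Y be Banach spaces over ℝ. If X has the Schur property and Y is almost reflexive, then every bounded linear operator T : X → Y is strictly singular. -/
open Filter Topology

variable {X : Type*} [NormedAddCommGroup X] [NormedSpace ℝ X] [CompleteSpace X]
variable {Y : Type*} [NormedAddCommGroup Y] [NormedSpace ℝ Y] [CompleteSpace Y]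

/-- If `X` has the Schur property and `Y` is almost reflexive, then every bounded linear
operator `T : X → Y` is strictly singular. -/
theorem stmt8 (hX : SchurProperty X) (hY : AlmostReflexive Y) (T : X →L[ℝ] Y) :
    StrictlySingular T := by
  rintro X₀ hclosed hfd ⟨c, hc, hbound⟩
  -- a 1-separated bounded sequence in X₀
  obtain ⟨R, u, hR, hle, hsep⟩ := exists_seq_norm_le_one_le_norm_sub (𝕜 := ℝ) (E := X₀) hfd
  set x : ℕ → X := fun n => (u n : X) with hx
  have hxmem : ∀ n, x n ∈ X₀ := fun n => (u n).2
  -- T ∘ x is bounded, extract weakly Cauchy subsequence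
  obtain ⟨φ, hφ, hwc⟩ := hY (fun n => T (x n))
    ⟨‖T‖ * R, fun n => le_trans (T.le_opNorm _) (by
      have : ‖x n‖ ≤ R := hle n
      nlinarith [norm_nonneg T])⟩
  -- injectivity of T on X₀
  have einj : Function.Injective (T.toLinearMap.comp X₀.subtype) := by
    intro a b hab
    have h0 : T ((a : X) - b) = 0 := by
      simp only [LinearMap.comp_apply, ContinuousLinearMap.coe_coe,
        Submodule.subtype_apply] at hab
      rw [map_sub, hab, sub_self]
    have := hbound ((a : X) - (b : X)) (X₀.sub_mem a.2 b.2)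
    rw [h0, norm_zero] at this
    have : ‖(a : X) - (b : X)‖ = 0 := le_antisymm (by nlinarith [norm_nonneg ((a:X) - b)])
      (norm_nonneg _)
    exact Subtype.ext (sub_eq_zero.mp (norm_eq_zero.mp this))
  set e : X₀ →ₗ[ℝ] Y := T.toLinearMap.comp X₀.subtype with he
  set W : Subspace ℝ Y := LinearMap.range e with hW
  set eq : X₀ ≃ₗ[ℝ] W := LinearEquiv.ofInjective e einj with heq
  -- x ∘ φ is weakly Cauchy in X
  have hxwc : WeaklyCauchySeq (x ∘ φ) := by
    intro f
    -- build a functional g on Y with g (T v) = f v for v ∈ X₀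
    set L₀ : W →ₗ[ℝ] ℝ :=
      (f.toLinearMap.comp X₀.subtype).comp eq.symm.toLinearMap with hL₀
    have hLbd : ∀ w : W, ‖L₀ w‖ ≤ (‖f‖ / c) * ‖w‖ := by
      intro w
      obtain ⟨v, hv⟩ : ∃ v : X₀, e v = (w : Y) := w.2
      have hsymm : eq.symm w = v := by
        rw [LinearEquiv.symm_apply_eq]
        exact Subtype.ext (by rw [← hv]; rfl)
      have hwnorm : c * ‖(v : X)‖ ≤ ‖(w : Y)‖ := by
        rw [← hv]; exact hbound (v : X) v.2
      have : ‖L₀ w‖ = ‖f (v : X)‖ := by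
        simp [hL₀, hsymm]
      rw [this]
      calc ‖f (v : X)‖ ≤ ‖f‖ * ‖(v : X)‖ := f.le_opNorm _
        _ ≤ (‖f‖ / c) * ‖(w : Y)‖ := by
            rw [div_mul_eq_mul_div, le_div_iff₀ hc]
            nlinarith [norm_nonneg f, norm_nonneg ((v : X))]
        _ = (‖f‖ / c) * ‖w‖ := rfl
    set L : W →L[ℝ] ℝ := LinearMap.mkContinuous L₀ (‖f‖ / c) hLbd with hL
    obtain ⟨g, hgext, -⟩ := exists_extension_norm_eq W L
    have key : ∀ n, f (x n) = g (T (x n)) := by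
      intro n
      have hmem : T (x n) ∈ W := ⟨u n, rfl⟩
      have hsymm : eq.symm ⟨T (x n), hmem⟩ = u n := by
        rw [LinearEquiv.symm_apply_eq]
        exact Subtype.ext (by rfl)
      have := hgext ⟨T (x n), hmem⟩
      simp only [hL, LinearMap.mkContinuous_apply, hL₀, LinearMap.comp_apply,
        LinearEquiv.coe_coe, hsymm] at this
      rw [this]; rfl
    obtain ⟨Lim, hLim⟩ := hwc g
    refine ⟨Lim, ?_⟩
    have : (fun n => f ((x ∘ φ) n)) = fun n => g (T (x (φ n))) := by
      funext n; exact key (φ n)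
    rw [this]
    exact hLim
  -- the difference sequence tends weakly to 0, hence in norm by Schur
  set d : ℕ → X := fun n => x (φ (n + 1)) - x (φ n) with hd
  have hdweak : WeakConvTo d 0 := by
    intro f
    obtain ⟨Lim, hLim⟩ := hxwc f
    have h1 : Tendsto (fun n => f (x (φ (n + 1)))) atTop (𝓝 Lim) :=
      hLim.comp (tendsto_add_atTop_nat 1)
    have h2 : Tendsto (fun n => f (d n)) atTop (𝓝 (Lim - Lim)) := by
      simp only [hd, map_sub]
      exact h1.sub hLim
    simpa using h2
  have hnorm : Tendsto d atTop (𝓝 0) := hX d 0 hdweak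
  have hnorm' : Tendsto (fun n => ‖d n‖) atTop (𝓝 0) := by
    simpa using hnorm.norm
  have hev : ∀ᶠ n in atTop, ‖d n‖ < 1 :=
    hnorm'.eventually (eventually_lt_nhds zero_lt_one) |>.mono (fun n h => h)
  obtain ⟨n, hn⟩ := hev.exists
  have : (1 : ℝ) ≤ ‖d n‖ := by
    have hne : φ (n + 1) ≠ φ n := (hφ.injective.ne_iff).mpr (by omega)
    have := hsep hne
    calc (1 : ℝ) ≤ ‖u (φ (n + 1)) - u (φ n)‖ := this
      _ = ‖d n‖ := by rw [hd]; rfl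
  linarith
end

section
/- Let X and Y be Banach spaces over ℝ. If every infinite-dimensional closed subspace of X has the Dunford–Pettis property and Y is reflexive (every bounded sequence in Y has a weakly convergent subsequence), then every bounded linear operator T : X → Y is strictly singular. -/
open Filter Topology

open scoped ENNReal in
/-- Bundle a uniformly bounded family of functionals into an operator into `ℓ∞`. -/
noncomputable def toEllInfty {Y : Type*} [NormedAddCommGroup Y] [NormedSpace ℝ Y]
    (g : ℕ → (Y →L[ℝ] ℝ)) (hg : ∀ k, ‖g k‖ ≤ 1) : Y →L[ℝ] lp (fun _ : ℕ => ℝ) ∞ :=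
  LinearMap.mkContinuous
    { toFun := fun y => ⟨fun k => g k y, memℓp_infty ⟨‖y‖, by
        rintro r ⟨k, rfl⟩
        calc ‖g k y‖ ≤ ‖g k‖ * ‖y‖ := (g k).le_opNorm y
        _ ≤ 1 * ‖y‖ := by have := hg k; nlinarith [norm_nonneg y]
        _ = ‖y‖ := one_mul _⟩⟩
      map_add' := fun x y => by ext k; simp; rfl
      map_smul' := fun c y => by ext k; simp }
    1 (fun y => by
      refine lp.norm_le_of_forall_le (by positivity) fun k => ?_
      calc ‖g k y‖ ≤ ‖g k‖ * ‖y‖ := (g k).le_opNorm y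
      _ ≤ 1 * ‖y‖ := by have := hg k; nlinarith [norm_nonneg y])

lemma toEllInfty_apply {Y : Type*} [NormedAddCommGroup Y] [NormedSpace ℝ Y]
    (g : ℕ → (Y →L[ℝ] ℝ)) (hg : ∀ k, ‖g k‖ ≤ 1) (y : Y) (k : ℕ) :
    (toEllInfty g hg y : ℕ → ℝ) k = g k y := rfl

set_option synthInstance.maxHeartbeats 1000000 in
lemma toEllInfty_lower {Y : Type*} [NormedAddCommGroup Y] [NormedSpace ℝ Y]
    (g : ℕ → (Y →L[ℝ] ℝ)) (hg : ∀ k, ‖g k‖ ≤ 1) (y : Y) (k : ℕ) :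
    |g k y| ≤ ‖toEllInfty g hg y‖ := by
  have := lp.norm_apply_le_norm (ENNReal.top_ne_zero) (toEllInfty g hg y) k
  simpa [toEllInfty_apply] using this

/-- A norm-closed subspace is weakly sequentially closed. -/
lemma aux_mem_of_weak {E : Type*} [NormedAddCommGroup E] [NormedSpace ℝ E]
    {S : Subspace ℝ E} (hS : IsClosed (S : Set E)) {y : E}
    {x : ℕ → E} (hx : ∀ n, x n ∈ S) (hconv : WeakConvTo x y) : y ∈ S := by
  by_contra hy
  obtain ⟨f, u, hfa, hfy⟩ := geometric_hahn_banach_closed_point (S.convex) hS hy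
  have hvan : ∀ a ∈ S, f a = 0 := by
    intro a ha
    by_contra h
    have h2 : f (((u+1)/f a) • a) < u := hfa _ (S.smul_mem _ ha)
    rw [map_smul] at h2
    simp only [smul_eq_mul] at h2
    rw [div_mul_cancel₀ _ h] at h2
    linarith
  have h0 : (0:ℝ) < u := by have := hfa 0 S.zero_mem; simpa using this
  have hconvf := hconv f
  simp only [fun n => hvan (x n) (hx n)] at hconvf
  have hz : Tendsto (fun _ : ℕ => (0:ℝ)) atTop (𝓝 0) := tendsto_const_nhds
  have : f y = 0 := tendsto_nhds_unique hconvf hz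
  linarith

variable {X : Type*} [NormedAddCommGroup X] [NormedSpace ℝ X] [CompleteSpace X]
variable {Y : Type*} [NormedAddCommGroup Y] [NormedSpace ℝ Y] [CompleteSpace Y]

set_option maxHeartbeats 4000000 in
set_option synthInstance.maxHeartbeats 400000 in
/-- If every infinite-dimensional closed subspace of `X` has the Dunford–Pettis property and
`Y` is reflexive, then every bounded linear operator `T : X → Y` is strictly singular. -/
theorem stmt10
    (hX : ∀ X₀ : Subspace ℝ X, IsClosed (X₀ : Set X) → ¬FiniteDimensional ℝ X₀ →
      DunfordPettisProp X₀)
    (hY : SeqReflexive Y) (T : X →L[ℝ] Y) : StrictlySingular T := by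
  intro X₀ hclosed hinf
  rintro ⟨c, hc, hbound⟩
  haveI : CompleteSpace X₀ := hclosed.completeSpace_coe
  set S : X₀ →L[ℝ] Y := T.comp X₀.subtypeL with hSdef
  have hSapp : ∀ z : X₀, S z = T (z : X) := fun z => rfl
  have hlow : ∀ z : X₀, c * ‖z‖ ≤ ‖S z‖ := by
    intro z
    have := hbound (z : X) z.2
    simpa [hSapp] using this
  -- S is weakly compact
  have hwc : WeaklyCompactOp S := by
    rintro x ⟨C, hC⟩
    have hbdd : ∃ C' : ℝ, ∀ n, ‖S (x n)‖ ≤ C' := by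
      refine ⟨‖S‖ * C, fun n => le_trans (S.le_opNorm _) ?_⟩
      have := hC n
      nlinarith [norm_nonneg S, norm_nonneg (x n)]
    obtain ⟨φ, hφ, y, hy'⟩ := hY (fun n => S (x n)) hbdd
    exact ⟨φ, hφ, y, hy'⟩
  -- the image subspace V is closed
  set V : Subspace ℝ Y := LinearMap.range (S : X₀ →ₗ[ℝ] Y) with hVdef
  have hVclosed : IsClosed (V : Set Y) := by
    rw [← isSeqClosed_iff_isClosed]
    intro v y hv hlim
    choose z hz using hv
    have hcauchy : CauchySeq z := by
      rw [Metric.cauchySeq_iff]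
      intro ε hε
      obtain ⟨N, hN⟩ := Metric.cauchySeq_iff.1 hlim.cauchySeq (c*ε) (by positivity)
      refine ⟨N, fun m hm n hn => ?_⟩
      have h1 := hlow (z m - z n)
      have h2 : S (z m - z n) = v m - v n := by rw [map_sub, show S (z m) = v m from hz m, show S (z n) = v n from hz n]
      rw [h2] at h1
      have h3 : dist (v m) (v n) < c * ε := hN m hm n hn
      rw [dist_eq_norm] at h3
      rw [dist_eq_norm]
      nlinarith [norm_nonneg (z m - z n)]
    obtain ⟨z₀, hz₀⟩ := cauchySeq_tendsto_of_complete hcauchy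
    have hlim2 : Tendsto (fun n => S (z n)) atTop (𝓝 (S z₀)) :=
      (S.continuous.tendsto _).comp hz₀
    have : S z₀ = y := by
      refine tendsto_nhds_unique ?_ hlim
      simpa [fun n => (show S (z n) = v n from hz n)] using hlim2
    exact ⟨z₀, this⟩
  -- the corestriction is a continuous linear equiv
  have hmemV : ∀ z : X₀, S z ∈ V := fun z => LinearMap.mem_range_self _ z
  set Sc : X₀ →L[ℝ] V := S.codRestrict V hmemV with hScdef
  have hker : LinearMap.ker (Sc : X₀ →ₗ[ℝ] V) = ⊥ := by
    rw [LinearMap.ker_eq_bot']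
    intro z hz
    have hz' : S z = 0 := by
      have h0 : (Sc z : Y) = ((0 : V) : Y) := congrArg _ hz
      rwa [ContinuousLinearMap.coe_codRestrict_apply, ZeroMemClass.coe_zero] at h0
    have := hlow z
    rw [hz'] at this
    simp only [norm_zero] at this
    have : ‖z‖ ≤ 0 := by nlinarith [norm_nonneg z]
    simpa using le_antisymm this (norm_nonneg z)
  have hsurj : LinearMap.range (Sc : X₀ →ₗ[ℝ] V) = ⊤ := by
    rw [LinearMap.range_eq_top]
    rintro ⟨y, z, hzy⟩
    exact ⟨z, Subtype.ext hzy⟩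
  haveI : CompleteSpace V := hVclosed.completeSpace_coe
  set e : X₀ ≃L[ℝ] V := ContinuousLinearEquiv.ofBijective Sc hker hsurj with hedef
  have heapp : ∀ z : X₀, (e z : Y) = S z := by
    intro z
    have h1 : e z = Sc z :=
      congrFun (ContinuousLinearEquiv.coeFn_ofBijective Sc hker hsurj) z
    rw [h1, ContinuousLinearMap.coe_codRestrict_apply]
  -- X₀ is sequentially reflexive
  have hrefl : ∀ x : ℕ → X₀, (∃ C : ℝ, ∀ n, ‖x n‖ ≤ C) →
      ∃ φ : ℕ → ℕ, StrictMono φ ∧ ∃ x₀ : X₀, WeakConvTo (fun n => x (φ n)) x₀ := by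
    intro x hb
    obtain ⟨φ, hφ, y, hy'⟩ := hwc x hb
    have hymem : y ∈ V :=
      aux_mem_of_weak hVclosed (fun n => hmemV (x (φ n))) hy'
    refine ⟨φ, hφ, e.symm ⟨y, hymem⟩, ?_⟩
    intro f
    obtain ⟨G, hG, -⟩ := exists_extension_norm_eq V
      (f.comp (e.symm : V →L[ℝ] X₀))
    have hGconv := hy' G
    have key1 : ∀ n, G (S (x (φ n))) = f (x (φ n)) := by
      intro n
      have h1 : G (S (x (φ n))) = G (e (x (φ n)) : Y) := by rw [heapp]
      rw [h1, hG (e (x (φ n)))]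
      simp
    have key2 : G y = f (e.symm ⟨y, hymem⟩) := hG ⟨y, hymem⟩
    simp only [key1, key2] at hGconv
    exact hGconv
  -- Riesz separated sequence, with a weakly convergent subsequence
  obtain ⟨R, u, hR, hu1, hu2⟩ := exists_seq_norm_le_one_le_norm_sub (𝕜 := ℝ) (E := X₀) hinf
  obtain ⟨φ, hφ, x₀, hwconv⟩ := hrefl u ⟨R, hu1⟩
  set w : ℕ → X₀ := fun n => u (φ n) with hwdef
  set v : ℕ → Y := fun n => S (w n) with hvdef
  -- dual vectors norming the differences of the v's
  have hdual : ∀ k : ℕ, ∃ g : Y →L[ℝ] ℝ, ‖g‖ ≤ 1 ∧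
      g (v (Nat.unpair k).1 - v (Nat.unpair k).2) = ‖v (Nat.unpair k).1 - v (Nat.unpair k).2‖ :=
    fun k => exists_dual_vector'' ℝ _
  choose g hg1 hg2 using hdual
  set A : Y →L[ℝ] lp (fun _ : ℕ => ℝ) (⊤ : ENNReal) := toEllInfty g hg1 with hAdef
  -- the small-universe target space
  set J := (LinearIsometryEquiv.ulift ℝ (lp (fun _ : ℕ => ℝ) (⊤ : ENNReal))).symm with hJdef
  set B : X₀ →L[ℝ] ULift (lp (fun _ : ℕ => ℝ) (⊤ : ENNReal)) :=
    (J.toLinearIsometry.toContinuousLinearMap.comp A).comp S with hBdef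
  have hBwc : WeaklyCompactOp B := by
    rintro x hb
    obtain ⟨ψ, hψ, y, hy'⟩ := hwc x hb
    refine ⟨ψ, hψ, J.toLinearIsometry.toContinuousLinearMap (A y), fun F => ?_⟩
    have := hy' (F.comp (J.toLinearIsometry.toContinuousLinearMap.comp A))
    exact this
  have hCC : CompletelyContinuousOp B := hX X₀ hclosed hinf _ B hBwc
  obtain ⟨ℓ, htend⟩ := hCC w x₀ hwconv
  obtain ⟨N, hN⟩ := Metric.cauchySeq_iff'.1 htend.cauchySeq c hc
  have hd : dist (B (w (N+1))) (B (w N)) < c := hN (N+1) (by omega)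
  rw [dist_eq_norm, ← map_sub] at hd
  have hnormB : ‖B (w (N+1) - w N)‖ = ‖A (v (N+1) - v N)‖ := by
    have h1 : ‖B (w (N+1) - w N)‖ = ‖J (A (S (w (N+1) - w N)))‖ := rfl
    rw [h1, J.norm_map]
    congr 2
    rw [map_sub]
  -- lower bound via the norming functional at the paired index
  set k₀ : ℕ := Nat.pair (N+1) N with hk₀
  have hunp : (Nat.unpair k₀).1 = N+1 ∧ (Nat.unpair k₀).2 = N := by
    constructor <;> simp [hk₀, Nat.unpair_pair]
  have hlowA : ‖v (N+1) - v N‖ ≤ ‖A (v (N+1) - v N)‖ := by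
    have h2 := hg2 k₀
    rw [hunp.1, hunp.2] at h2
    have h3 := toEllInfty_lower g hg1 (v (N+1) - v N) k₀
    rw [h2, abs_of_nonneg (norm_nonneg _)] at h3
    exact h3
  have hsep : (1:ℝ) ≤ ‖w (N+1) - w N‖ := hu2 (by
    intro h
    exact absurd (hφ.injective h) (by omega))
  have hlow2 : c * ‖w (N+1) - w N‖ ≤ ‖v (N+1) - v N‖ := by
    have := hlow (w (N+1) - w N)
    rw [map_sub] at this
    exact this
  rw [hnormB] at hd
  nlinarith
end

section
/- Let X and Y be Banach spaces over ℝ such that every bounded linear operator from X to Y is completely continuous, and suppose X has the reciprocal Dunford–Pettis property. Then every bounded linear operator T : X → Y is strictly singular. -/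
open Filter Topology

variable {X : Type*} [NormedAddCommGroup X] [NormedSpace ℝ X] [CompleteSpace X]
variable {Y : Type*} [NormedAddCommGroup Y] [NormedSpace ℝ Y] [CompleteSpace Y]

open scoped ENNReal in
/-- Auxiliary: if `S` is bounded below on a closed submodule `W`, and `S uₙ` converges weakly
with all `uₙ ∈ W`, then `uₙ` converges weakly in the domain. -/
theorem weakConv_pullback {X : Type*} [NormedAddCommGroup X] [NormedSpace ℝ X]
    {Z : Type*} [NormedAddCommGroup Z] [NormedSpace ℝ Z] [CompleteSpace Z]
    (S : X →L[ℝ] Z) (W : Submodule ℝ X) (hWclosed : IsClosed (W : Set X))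
    [CompleteSpace W] {c : ℝ} (hc : 0 < c) (hlowS : ∀ x ∈ W, c * ‖x‖ ≤ ‖S x‖)
    (u : ℕ → X) (hu : ∀ n, u n ∈ W) (w : Z)
    (hw : WeakConvTo (fun n => S (u n)) w) : ∃ x₀ : X, WeakConvTo u x₀ := by
  set S₀ : W →L[ℝ] Z := S.comp W.subtypeL with hS₀
  have hlow₀ : ∀ z : W, c * ‖z‖ ≤ ‖S₀ z‖ := fun z => hlowS (z : X) z.2
  have hanti : AntilipschitzWith ⟨c⁻¹, inv_nonneg.2 hc.le⟩ S₀ := by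
    apply AddMonoidHomClass.antilipschitz_of_bound S₀
    intro z
    show ‖z‖ ≤ c⁻¹ * ‖S₀ z‖
    calc ‖z‖ = c⁻¹ * (c * ‖z‖) := by field_simp
      _ ≤ c⁻¹ * ‖S₀ z‖ := mul_le_mul_of_nonneg_left (hlow₀ z) (inv_nonneg.2 hc.le)
  have hclosed : IsClosed (Set.range S₀) := hanti.isClosed_range S₀.uniformContinuous
  set p : Submodule ℝ Z := LinearMap.range (S₀ : W →ₗ[ℝ] Z) with hp
  have hpclosed : IsClosed (p : Set Z) := by
    have : (p : Set Z) = Set.range S₀ := LinearMap.coe_range _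
    rw [this]; exact hclosed
  haveI : CompleteSpace p := hpclosed.completeSpace_coe
  set S₁ : W →L[ℝ] p := S₀.codRestrict p (fun z => LinearMap.mem_range_self _ z) with hS₁
  have hker₁ : LinearMap.ker (S₁ : W →ₗ[ℝ] p) = ⊥ := by
    rw [LinearMap.ker_eq_bot]
    intro a b hab
    apply hanti.injective
    have : (S₁ a : Z) = (S₁ b : Z) := by exact congrArg Subtype.val hab
    simpa [S₁] using this
  have hrange₁ : LinearMap.range (S₁ : W →ₗ[ℝ] p) = ⊤ := by
    rw [LinearMap.range_eq_top]
    rintro ⟨z, hz⟩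
    obtain ⟨a, ha⟩ := hz
    exact ⟨a, by ext; simpa [S₁] using ha⟩
  let e : W ≃L[ℝ] p := ContinuousLinearEquiv.ofBijective S₁ hker₁ hrange₁
  have he : ∀ z : W, e z = S₁ z := fun z => rfl
  -- the weak limit w lies in p
  have hwp : w ∈ p := by
    by_contra hwn
    obtain ⟨f, s, hfs, hsw⟩ := geometric_hahn_banach_closed_point p.convex hpclosed hwn
    have hf0 : ∀ z ∈ p, f z = 0 := by
      intro z hz
      by_contra hfz
      rcases lt_or_gt_of_ne hfz with hneg | hpos
      · have : f ((s / f z) • z) < s := hfs _ (p.smul_mem _ hz)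
        rw [map_smul, smul_eq_mul, div_mul_cancel₀ _ (ne_of_lt hneg)] at this
        exact lt_irrefl s this
      · have : f (((s + 1) / f z) • z) < s := hfs _ (p.smul_mem _ hz)
        rw [map_smul, smul_eq_mul, div_mul_cancel₀ _ (ne_of_gt hpos)] at this
        linarith
    have h1 : Tendsto (fun n => f (S (u n))) atTop (𝓝 (f w)) := hw f
    have hzero : ∀ n, f (S (u n)) = 0 := fun n => hf0 _ ⟨⟨u n, hu n⟩, rfl⟩
    have h2 : Tendsto (fun _ : ℕ => (0 : ℝ)) atTop (𝓝 (f w)) := by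
      simpa [hzero] using h1
    have hfw : f w = 0 := (tendsto_nhds_unique h2 tendsto_const_nhds)
    have hs0 : 0 < s := by simpa using hfs 0 p.zero_mem
    rw [hfw] at hsw
    linarith
  set x₀ : W := e.symm ⟨w, hwp⟩ with hx₀
  have hSx₀ : S (x₀ : X) = w := by
    have h1 : S₁ x₀ = ⟨w, hwp⟩ := by
      rw [← he x₀]
      exact e.apply_symm_apply _
    have h2 := congrArg Subtype.val h1
    simpa [S₁, S₀] using h2
  refine ⟨(x₀ : X), ?_⟩
  intro f
  obtain ⟨g, hg, -⟩ := exists_extension_norm_eq p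
    ((f.comp W.subtypeL).comp (e.symm : p →L[ℝ] W))
  have hgS : ∀ z : W, g (S (z : X)) = f (z : X) := by
    intro z
    have h1 : S (z : X) = ((S₁ z : p) : Z) := rfl
    rw [h1, hg (S₁ z)]
    simp only [ContinuousLinearMap.coe_comp', Function.comp_apply,
      ContinuousLinearEquiv.coe_coe]
    rw [← he z, e.symm_apply_apply]
    rfl
  have h1 : Tendsto (fun n => g (S (u n))) atTop (𝓝 (g w)) := hw g
  have h2 : ∀ n, g (S (u n)) = f (u n) := fun n => hgS ⟨u n, hu n⟩
  have h3 : g w = f (x₀ : X) := by rw [← hSx₀]; exact hgS x₀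
  rw [show (𝓝 (f ((x₀ : X)))) = 𝓝 (g w) by rw [h3]]
  exact h1.congr fun n => h2 n

open scoped ENNReal in
/-- If every bounded linear operator from `X` to `Y` is completely continuous and `X` has the
reciprocal Dunford–Pettis property, then every bounded linear operator `T : X → Y` is strictly
singular. -/
theorem stmt12 (h : ∀ T : X →L[ℝ] Y, CompletelyContinuousOp T)
    (hX : ReciprocalDunfordPettisProp X) (T : X →L[ℝ] Y) : StrictlySingular T := by
  classical
  intro X₀ hX₀closed hdim
  rintro ⟨c, hc, hlow⟩
  obtain ⟨R, v, hR1, hvR, hsep⟩ := exists_seq_norm_le_one_le_norm_sub (𝕜 := ℝ) hdim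
  set u : ℕ → X := fun n => (v n : X) with hu
  have hub : ∃ C : ℝ, ∀ n, ‖u n‖ ≤ C := ⟨R, fun n => hvR n⟩
  -- the closed span of the sequence
  set W : Submodule ℝ X := (Submodule.span ℝ (Set.range u)).topologicalClosure with hW
  have hWclosed : IsClosed (W : Set X) := Submodule.isClosed_topologicalClosure _
  have hspan_le : Submodule.span ℝ (Set.range u) ≤ X₀ := by
    rw [Submodule.span_le]; rintro _ ⟨n, rfl⟩; exact (v n).2
  have hWle : W ≤ X₀ := Submodule.topologicalClosure_minimal _ hspan_le hX₀closed
  haveI : CompleteSpace W := hWclosed.completeSpace_coe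
  have huW : ∀ n, u n ∈ W :=
    fun n => Submodule.le_topologicalClosure _ (Submodule.subset_span ⟨n, rfl⟩)
  -- a separable set containing T '' W
  set M : Set Y := closure (T '' (Submodule.span ℝ (Set.range u) : Set X)) with hM
  have hMsep : TopologicalSpace.IsSeparable M := by
    apply TopologicalSpace.IsSeparable.closure
    exact (((Set.countable_range u).isSeparable).span).image T.continuous
  obtain ⟨cset, hccount, hMsub⟩ := hMsep
  have hMzero : (0 : Y) ∈ M :=
    subset_closure ⟨0, Submodule.zero_mem _, map_zero T⟩
  have hcne : cset.Nonempty := by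
    rcases cset.eq_empty_or_nonempty with hrf | hne
    · exfalso; rw [hrf, closure_empty] at hMsub; exact hMsub hMzero
    · exact hne
  obtain ⟨d, hd⟩ := hccount.exists_eq_range hcne
  -- norming functionals for the dense sequence
  have hfs : ∀ n : ℕ, ∃ g : Y →L[ℝ] ℝ, ‖g‖ ≤ 1 ∧ g (d n) = ‖d n‖ :=
    fun n => exists_dual_vector'' ℝ (d n)
  choose f hf1 hfd using hfs
  have hfy : ∀ (n : ℕ) (y : Y), ‖f n y‖ ≤ ‖y‖ := by
    intro n y
    calc ‖f n y‖ ≤ ‖f n‖ * ‖y‖ := (f n).le_opNorm y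
      _ ≤ 1 * ‖y‖ := mul_le_mul_of_nonneg_right (hf1 n) (norm_nonneg y)
      _ = ‖y‖ := one_mul _
  -- the embedding into ℓ∞
  have hmem : ∀ y : Y, Memℓp (fun n => f n y) ∞ := by
    intro y
    apply memℓp_infty
    refine ⟨‖y‖, ?_⟩
    rintro r ⟨n, rfl⟩
    exact hfy n y
  let Jlin : Y →ₗ[ℝ] lp (fun _ : ℕ => ℝ) ∞ :=
    { toFun := fun y => ⟨fun n => f n y, hmem y⟩
      map_add' := fun a b => lp.ext (funext fun n => map_add (f n) a b)
      map_smul' := fun r a => lp.ext (funext fun n => map_smul (f n) r a) }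
  have Jbound : ∀ y, ‖Jlin y‖ ≤ 1 * ‖y‖ := by
    intro y
    rw [one_mul]
    exact lp.norm_le_of_forall_le (norm_nonneg y) fun n => hfy n y
  let J : Y →L[ℝ] lp (fun _ : ℕ => ℝ) ∞ := Jlin.mkContinuous 1 Jbound
  have hJapp : ∀ (y : Y) (n : ℕ), J y n = f n y := fun y n => rfl
  have hJiso : ∀ y ∈ M, ‖y‖ ≤ ‖J y‖ := by
    intro y hyM
    have hyc : y ∈ closure (Set.range d) := by
      have := hMsub hyM; rwa [hd] at this
    refine le_of_forall_pos_le_add ?_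
    intro ε hε
    obtain ⟨n, hn⟩ := Metric.mem_closure_range_iff.1 hyc (ε / 2) (by linarith)
    rw [dist_eq_norm] at hn
    have h1 : ‖y‖ ≤ ‖y - d n‖ + ‖d n‖ := by
      calc ‖y‖ = ‖(y - d n) + d n‖ := by congr 1; abel
        _ ≤ ‖y - d n‖ + ‖d n‖ := norm_add_le _ _
    have h2 : ‖d n‖ = f n y + f n (d n - y) := by
      rw [← hfd n, ← map_add]; congr 1; abel
    have h3 : f n (d n - y) ≤ ‖y - d n‖ := by
      calc f n (d n - y) ≤ ‖f n (d n - y)‖ := le_abs_self _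
        _ ≤ ‖d n - y‖ := hfy n _
        _ = ‖y - d n‖ := norm_sub_rev _ _
    have h4 : f n y ≤ ‖J y‖ := by
      calc f n y ≤ ‖f n y‖ := le_abs_self _
        _ = ‖J y n‖ := by rw [hJapp]
        _ ≤ ‖J y‖ := lp.norm_apply_le_norm ENNReal.top_ne_zero _ _
    linarith
  -- the lifted operator
  let lift := ((LinearIsometryEquiv.ulift ℝ (lp (fun _ : ℕ => ℝ) ∞)).symm :
    lp (fun _ : ℕ => ℝ) ∞ ≃ₗᵢ[ℝ] ULift (lp (fun _ : ℕ => ℝ) ∞))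
  let L : Y →L[ℝ] ULift (lp (fun _ : ℕ => ℝ) ∞) :=
    (lift.toContinuousLinearEquiv : lp (fun _ : ℕ => ℝ) ∞ →L[ℝ] _).comp J
  have hLnorm : ∀ y : Y, ‖L y‖ = ‖J y‖ := fun y => lift.norm_map (J y)
  let S : X →L[ℝ] ULift (lp (fun _ : ℕ => ℝ) ∞) := L.comp T
  -- S is completely continuous
  have hScc : CompletelyContinuousOp S := by
    intro x x₀ hx
    obtain ⟨y, hy⟩ := h T x x₀ hx
    exact ⟨L y, (L.continuous.tendsto y).comp hy⟩
  -- S is weakly compact by the reciprocal Dunford–Pettis property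
  obtain ⟨φ, hφ, w, hw⟩ := hX _ S hScc u hub
  -- S is bounded below on W
  have hlowS : ∀ x ∈ W, c * ‖x‖ ≤ ‖S x‖ := by
    intro x hx
    have hxc : x ∈ closure ((Submodule.span ℝ (Set.range u) : Set X)) := by
      rw [← Submodule.topologicalClosure_coe]; exact hx
    have hTx : T x ∈ M :=
      image_closure_subset_closure_image T.continuous ⟨x, hxc, rfl⟩
    calc c * ‖x‖ ≤ ‖T x‖ := hlow x (hWle hx)
      _ ≤ ‖J (T x)‖ := hJiso _ hTx
      _ = ‖L (T x)‖ := (hLnorm _).symm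
      _ = ‖S x‖ := rfl
  -- pull back the weak limit
  obtain ⟨x₀, hweak⟩ := weakConv_pullback S W hWclosed hc hlowS (u ∘ φ)
    (fun n => huW (φ n)) w hw
  -- complete continuity of T gives norm convergence, contradicting separation
  obtain ⟨z, hz⟩ := h T (u ∘ φ) x₀ hweak
  have hcauchy : CauchySeq (fun n => T ((u ∘ φ) n)) := hz.cauchySeq
  rw [Metric.cauchySeq_iff] at hcauchy
  obtain ⟨N, hN⟩ := hcauchy c hc
  have hd' := hN N le_rfl (N + 1) (by omega)
  have hsep' : (1 : ℝ) ≤ ‖u (φ N) - u (φ (N + 1))‖ := by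
    have hne : φ N ≠ φ (N + 1) := fun hcon => by
      have := hφ.injective hcon; omega
    exact hsep hne
  have hmemX₀ : u (φ N) - u (φ (N + 1)) ∈ X₀ :=
    sub_mem (v (φ N)).2 (v (φ (N + 1))).2
  have hle : c * ‖u (φ N) - u (φ (N + 1))‖ ≤ ‖T (u (φ N)) - T (u (φ (N + 1)))‖ := by
    have := hlow _ hmemX₀
    rwa [map_sub] at this
  have h1 : c ≤ c * ‖u (φ N) - u (φ (N + 1))‖ := le_mul_of_one_le_right hc.le hsep'
  have h2 : ‖T (u (φ N)) - T (u (φ (N + 1)))‖ < c := by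
    simpa [dist_eq_norm] using hd'
  linarith
end
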